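/- arXiv:1605.07830 — 7 statements merged into one kernel-verified Lean document; each statement's English description precedes it below -/
import Mathlib

section
/- Let f : [0,1]^d → ℝ be continuously differentiable and fix i ∈ {1,…,d}. If there are constants c, C ≥ 0 such that c ≤ |∂f/∂x_i(x)| ≤ C for all x ∈ [0,1]^d, and if the total variance D is strictly positive, then c²/(12D) ≤ S_i^tot ≤ C²/(12D). -/
open MeasureTheory Real

noncomputable section

/-- The unit cube `[0,1]^d` in `ℝ^d`. -/
def unitCube (d : ℕ) : Set (Fin d → ℝ) := Set.Icc 0 1

/-- The partial derivative `∂f/∂x_i` at the point `x`. -/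
def pderivI {d : ℕ} (f : (Fin d → ℝ) → ℝ) (i : Fin d) (x : Fin d → ℝ) : ℝ :=
  deriv (fun t : ℝ => f (Function.update x i t)) (x i)

/-- `u_i(x) = f(x) - ∫₀¹ f(x₁,…,x_{i-1},t,x_{i+1},…,x_d) dt`, the sum of all ANOVA
terms of `f` depending on `x_i`. -/
def uComp {d : ℕ} (f : (Fin d → ℝ) → ℝ) (i : Fin d) (x : Fin d → ℝ) : ℝ :=
  f x - ∫ t in (0:ℝ)..1, f (Function.update x i t)

/-- The total variance `D = ∫ f² dx − (∫ f dx)²` over the unit cube. -/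
def totVar {d : ℕ} (f : (Fin d → ℝ) → ℝ) : ℝ :=
  (∫ x in unitCube d, (f x) ^ 2) - (∫ x in unitCube d, f x) ^ 2

/-- The total partial variance `D_i^tot = ∫ u_i² dx`. -/
def DTot {d : ℕ} (f : (Fin d → ℝ) → ℝ) (i : Fin d) : ℝ :=
  ∫ x in unitCube d, (uComp f i x) ^ 2

/-- The total Sobol' sensitivity index `S_i^tot = D_i^tot / D`. -/
def STot {d : ℕ} (f : (Fin d → ℝ) → ℝ) (i : Fin d) : ℝ :=
  DTot f i / totVar f

/-- The DGSM `ν_i = ∫ (∂f/∂x_i)² dx`. -/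
def nuDGSM {d : ℕ} (f : (Fin d → ℝ) → ℝ) (i : Fin d) : ℝ :=
  ∫ x in unitCube d, (pderivI f i x) ^ 2

/-- The DGSM `w_i^{(m)} = ∫ x_i^m (∂f/∂x_i) dx`. -/
def wDGSM {d : ℕ} (f : (Fin d → ℝ) → ℝ) (i : Fin d) (m : ℝ) : ℝ :=
  ∫ x in unitCube d, (x i) ^ m * pderivI f i x

/-- The DGSM `ς_i = (1/2) ∫ x_i (1 - x_i) (∂f/∂x_i)² dx`. -/
def sigmaDGSM {d : ℕ} (f : (Fin d → ℝ) → ℝ) (i : Fin d) : ℝ :=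
  (1 / 2) * ∫ x in unitCube d, x i * (1 - x i) * (pderivI f i x) ^ 2

namespace SobolAux

abbrev mu0 : Measure ℝ := volume.restrict (Set.Icc 0 1)
instance : IsProbabilityMeasure mu0 := ⟨by simp [Real.volume_Icc]⟩

lemma integrable_mu0 {h : ℝ → ℝ} (hh : Continuous h) : Integrable h mu0 :=
  hh.integrableOn_Icc

lemma measure_pi_congr {ι : Type*} {α : ι → Type*} [∀ i, MeasurableSpace (α i)]
    (F1 F2 : Fintype ι) (μ : ∀ i, Measure (α i)) :
    @Measure.pi ι α F1 _ μ = @Measure.pi ι α F2 _ μ := by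
  rw [Subsingleton.elim F1 F2]

lemma cube_eq (d : ℕ) : unitCube d = Set.pi Set.univ (fun _ : Fin d => Set.Icc (0:ℝ) 1) := by
  rw [unitCube, ← Set.pi_univ_Icc]; rfl

lemma pi_mu0_eq (d : ℕ) :
    (Measure.pi fun _ : Fin d => mu0) = volume.restrict (unitCube d) := by
  refine Measure.pi_eq fun s hs => ?_
  rw [cube_eq, Measure.restrict_apply (MeasurableSet.univ_pi hs),
    ← Set.pi_inter_distrib, volume_pi_pi]
  exact Finset.prod_congr rfl fun j _ => (Measure.restrict_apply (hs j)).symm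

section deriv
variable {d : ℕ} (f : (Fin d → ℝ) → ℝ) (i : Fin d)
variable (hf : ContDiff ℝ 1 f)
include hf

lemma slice_hasDerivAt (x : Fin d → ℝ) (s : ℝ) :
    HasDerivAt (fun t : ℝ => f (Function.update x i t))
      (fderiv ℝ f (Function.update x i s) (Pi.single i 1)) s :=
  (hf.differentiable one_ne_zero (Function.update x i s)).hasFDerivAt.comp_hasDerivAt s
    (hasDerivAt_update x i s)

lemma pderivI_eq_fderiv (x : Fin d → ℝ) :
    pderivI f i x = fderiv ℝ f x (Pi.single i 1) := by
  have h := slice_hasDerivAt f i hf x (x i)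
  rw [Function.update_eq_self] at h
  exact h.deriv

lemma deriv_slice (x : Fin d → ℝ) (s : ℝ) :
    deriv (fun t : ℝ => f (Function.update x i t)) s = pderivI f i (Function.update x i s) := by
  rw [pderivI_eq_fderiv f i hf]
  exact (slice_hasDerivAt f i hf x s).deriv

lemma pderivI_continuous : Continuous (pderivI f i) := by
  have : Continuous fun x => fderiv ℝ f x (Pi.single i 1) :=
    (hf.continuous_fderiv one_ne_zero).clm_apply continuous_const
  simpa [funext fun x => pderivI_eq_fderiv f i hf x] using this

lemma uComp_continuous : Continuous (uComp f i) := by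
  have h2 : Continuous fun x : Fin d → ℝ => ∫ t in (0:ℝ)..1, f (Function.update x i t) := by
    refine intervalIntegral.continuous_parametric_intervalIntegral_of_continuous' ?_ 0 1
    exact hf.continuous.comp (continuous_fst.update i continuous_snd)
  exact hf.continuous.sub h2

end deriv

/-! 1-d integral computations -/

lemma mu0_eq_interval (h : ℝ → ℝ) : ∫ t, h t ∂mu0 = ∫ t in (0:ℝ)..1, h t := by
  rw [intervalIntegral.integral_of_le zero_le_one]
  exact MeasureTheory.integral_Icc_eq_integral_Ioc

lemma mu0_moment1 : ∫ t, t ∂mu0 = 1/2 := by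
  rw [mu0_eq_interval]; simp

lemma mu0_moment2 : ∫ t, t^2 ∂mu0 = 1/3 := by
  rw [mu0_eq_interval, integral_pow]; norm_num

lemma poly_integral (a b : ℝ) : ∫ t, (t^2 - a*t + b) ∂mu0 = 1/3 - a/2 + b := by
  have I1 : Integrable (fun t : ℝ => t^2 - a*t) mu0 := integrable_mu0 (by fun_prop)
  have I2 : Integrable (fun t : ℝ => t^2) mu0 := integrable_mu0 (by fun_prop)
  have I3 : Integrable (fun t : ℝ => a*t) mu0 := integrable_mu0 (by fun_prop)
  rw [integral_add I1 (integrable_const b), integral_sub I2 I3,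
    integral_const_mul, mu0_moment1, mu0_moment2, integral_const]
  simp; ring

lemma inner_sq_eq (s : ℝ) : ∫ t, (s - t)^2 ∂mu0 = s^2 - s + 1/3 := by
  have e : (fun t : ℝ => (s - t)^2) = fun t => t^2 - (2*s)*t + s^2 := by
    funext t; ring
  rw [e, poly_integral]; ring

lemma poly_integral' : ∫ s, (s^2 - s + 1/3) ∂mu0 = 1/6 := by
  have e : (fun s : ℝ => s^2 - s + 1/3) = fun s => s^2 - 1*s + 1/3 := by
    funext s; ring
  rw [e, poly_integral]; norm_num

section onedim
variable {g : ℝ → ℝ} (hg : Continuous g)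
include hg

lemma gexpand (a b : ℝ) :
    ∫ t, ((g t)^2 - a*(g t) + b) ∂mu0
      = (∫ t, (g t)^2 ∂mu0) - a * (∫ t, g t ∂mu0) + b := by
  have I1 : Integrable (fun t : ℝ => (g t)^2 - a*(g t)) mu0 := integrable_mu0 (by fun_prop)
  have I2 : Integrable (fun t : ℝ => (g t)^2) mu0 := integrable_mu0 (by fun_prop)
  have I3 : Integrable (fun t : ℝ => a*(g t)) mu0 := integrable_mu0 (by fun_prop)
  rw [integral_add I1 (integrable_const b), integral_sub I2 I3, integral_const_mul,
    integral_const]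
  simp

lemma var_key :
    ∫ s, (g s - ∫ t, g t ∂mu0)^2 ∂mu0 = (∫ t, (g t)^2 ∂mu0) - (∫ t, g t ∂mu0)^2 := by
  set m := ∫ t, g t ∂mu0 with hm
  have e : (fun s : ℝ => (g s - m)^2) = fun s => (g s)^2 - (2*m)*(g s) + m^2 := by
    funext s; ring
  rw [e, gexpand hg, ← hm]; ring

lemma inner_key (s : ℝ) :
    ∫ t, (g s - g t)^2 ∂mu0
      = (g s)^2 - (2*(∫ t, g t ∂mu0))*(g s) + ∫ t, (g t)^2 ∂mu0 := by
  have e : (fun t : ℝ => (g s - g t)^2)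
      = fun t => (g t)^2 - (2*(g s))*(g t) + (g s)^2 := by
    funext t; ring
  rw [e, gexpand hg]; ring

lemma double_key :
    ∫ s, ∫ t, (g s - g t)^2 ∂mu0 ∂mu0
      = 2 * ((∫ t, (g t)^2 ∂mu0) - (∫ t, g t ∂mu0)^2) := by
  set m := ∫ t, g t ∂mu0 with hm
  set K := ∫ t, (g t)^2 ∂mu0 with hK
  simp_rw [inner_key hg, ← hm, ← hK]
  rw [gexpand hg, ← hm, ← hK]; ring

lemma oneDim {c C : ℝ} (hc : 0 ≤ c)
    (hlow : ∀ s ∈ Set.Icc (0:ℝ) 1, ∀ t ∈ Set.Icc (0:ℝ) 1, c * |s - t| ≤ |g s - g t|)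
    (hupp : ∀ s ∈ Set.Icc (0:ℝ) 1, ∀ t ∈ Set.Icc (0:ℝ) 1, |g s - g t| ≤ C * |s - t|) :
    c^2/12 ≤ ∫ s, (g s - ∫ t, g t ∂mu0)^2 ∂mu0 ∧
      ∫ s, (g s - ∫ t, g t ∂mu0)^2 ∂mu0 ≤ C^2/12 := by
  set m := ∫ t, g t ∂mu0 with hm
  set K := ∫ t, (g t)^2 ∂mu0 with hK
  have hsq : ∀ s ∈ Set.Icc (0:ℝ) 1, ∀ t ∈ Set.Icc (0:ℝ) 1,
      c^2 * (s-t)^2 ≤ (g s - g t)^2 ∧ (g s - g t)^2 ≤ C^2 * (s-t)^2 := by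
    intro s hs t ht
    have h1 := hlow s hs t ht
    have h2 := hupp s hs t ht
    constructor
    · have := pow_le_pow_left₀ (mul_nonneg hc (abs_nonneg _)) h1 2
      calc c^2 * (s-t)^2 = (c * |s - t|)^2 := by rw [mul_pow, sq_abs]
        _ ≤ |g s - g t|^2 := this
        _ = (g s - g t)^2 := sq_abs _
    · have := pow_le_pow_left₀ (abs_nonneg _) h2 2
      calc (g s - g t)^2 = |g s - g t|^2 := (sq_abs _).symm
        _ ≤ (C * |s - t|)^2 := this
        _ = C^2 * (s-t)^2 := by rw [mul_pow, sq_abs]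
  have int_outer : Integrable (fun s => ∫ t, (g s - g t)^2 ∂mu0) mu0 := by
    have e : (fun s => ∫ t, (g s - g t)^2 ∂mu0)
        = fun s => (g s)^2 - (2*m)*(g s) + K := by
      funext s; rw [inner_key hg, ← hm, ← hK]
    rw [e]; exact integrable_mu0 (by fun_prop)
  have hlow2 : c^2 * (1/6) ≤ ∫ s, ∫ t, (g s - g t)^2 ∂mu0 ∂mu0 := by
    have step1 : ∀ s ∈ Set.Icc (0:ℝ) 1,
        c^2 * (s^2 - s + 1/3) ≤ ∫ t, (g s - g t)^2 ∂mu0 := by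
      intro s hs
      have e : c^2 * (s^2 - s + 1/3) = ∫ t, c^2 * (s - t)^2 ∂mu0 := by
        rw [integral_const_mul, inner_sq_eq]
      rw [e]
      refine setIntegral_mono_on (integrable_mu0 (by fun_prop))
        (integrable_mu0 (by fun_prop)) measurableSet_Icc ?_
      intro t ht; exact (hsq s hs t ht).1
    have base : ∫ s, c^2 * (s^2 - s + 1/3) ∂mu0 = c^2 * (1/6) := by
      rw [integral_const_mul, poly_integral']
    rw [← base]
    exact setIntegral_mono_on (integrable_mu0 (by fun_prop)) int_outer
      measurableSet_Icc step1
  have hupp2 : ∫ s, ∫ t, (g s - g t)^2 ∂mu0 ∂mu0 ≤ C^2 * (1/6) := by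
    have step1 : ∀ s ∈ Set.Icc (0:ℝ) 1,
        ∫ t, (g s - g t)^2 ∂mu0 ≤ C^2 * (s^2 - s + 1/3) := by
      intro s hs
      have e : C^2 * (s^2 - s + 1/3) = ∫ t, C^2 * (s - t)^2 ∂mu0 := by
        rw [integral_const_mul, inner_sq_eq]
      rw [e]
      refine setIntegral_mono_on (integrable_mu0 (by fun_prop))
        (integrable_mu0 (by fun_prop)) measurableSet_Icc ?_
      intro t ht; exact (hsq s hs t ht).2
    have base : ∫ s, C^2 * (s^2 - s + 1/3) ∂mu0 = C^2 * (1/6) := by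
      rw [integral_const_mul, poly_integral']
    rw [← base]
    exact setIntegral_mono_on int_outer (integrable_mu0 (by fun_prop))
      measurableSet_Icc step1
  have hdouble := double_key hg
  have hvar := var_key hg
  rw [← hm, ← hK] at hdouble hvar
  rw [hvar]
  constructor <;> linarith

end onedim

/-! mean value / sign lemmas -/

open Set in
lemma lower_of_deriv_ge {g : ℝ → ℝ} (hgd : Differentiable ℝ g) {c : ℝ}
    (h : ∀ s ∈ Set.Icc (0:ℝ) 1, c ≤ deriv g s) :
    ∀ s ∈ Set.Icc (0:ℝ) 1, ∀ t ∈ Set.Icc (0:ℝ) 1, c * |s - t| ≤ |g s - g t| := by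
  have key : ∀ t ∈ Set.Icc (0:ℝ) 1, ∀ s ∈ Set.Icc (0:ℝ) 1, t ≤ s →
      c * (s - t) ≤ g s - g t := by
    intro t ht s hs hts
    exact (convex_Icc (0:ℝ) 1).mul_sub_le_image_sub_of_le_deriv
      hgd.continuous.continuousOn hgd.differentiableOn
      (fun x hx => h x (Ioo_subset_Icc_self (by rwa [interior_Icc] at hx)))
      t ht s hs hts
  intro s hs t ht
  rcases le_total t s with hts | hst
  · rw [abs_of_nonneg (sub_nonneg.2 hts)]
    exact le_trans (key t ht s hs hts) (le_abs_self _)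
  · rw [abs_sub_comm s t, abs_of_nonneg (sub_nonneg.2 hst), abs_sub_comm]
    exact le_trans (key s hs t ht hst) (le_abs_self _)

open Set in
lemma upper_of_abs_deriv_le {g : ℝ → ℝ} (hgd : Differentiable ℝ g) {C : ℝ}
    (h : ∀ s ∈ Set.Icc (0:ℝ) 1, |deriv g s| ≤ C) :
    ∀ s ∈ Set.Icc (0:ℝ) 1, ∀ t ∈ Set.Icc (0:ℝ) 1, |g s - g t| ≤ C * |s - t| := by
  have key : ∀ t ∈ Set.Icc (0:ℝ) 1, ∀ s ∈ Set.Icc (0:ℝ) 1, t ≤ s →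
      |g s - g t| ≤ C * (s - t) := by
    intro t ht s hs hts
    have h1 : g s - g t ≤ C * (s - t) :=
      (convex_Icc (0:ℝ) 1).image_sub_le_mul_sub_of_deriv_le
        hgd.continuous.continuousOn hgd.differentiableOn
        (fun x hx => (abs_le.1 (h x (Ioo_subset_Icc_self
          (by rwa [interior_Icc] at hx)))).2) t ht s hs hts
    have h2 : -C * (s - t) ≤ g s - g t :=
      (convex_Icc (0:ℝ) 1).mul_sub_le_image_sub_of_le_deriv
        hgd.continuous.continuousOn hgd.differentiableOn
        (fun x hx => (abs_le.1 (h x (Ioo_subset_Icc_self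
          (by rwa [interior_Icc] at hx)))).1) t ht s hs hts
    exact abs_le.2 ⟨by linarith, h1⟩
  intro s hs t ht
  rcases le_total t s with hts | hst
  · rw [abs_of_nonneg (sub_nonneg.2 hts)]
    exact key t ht s hs hts
  · rw [abs_sub_comm s t, abs_of_nonneg (sub_nonneg.2 hst), abs_sub_comm]
    exact key s hs t ht hst

lemma deriv_pos_of_pos_at_zero {g : ℝ → ℝ} (hgc : Continuous (deriv g))
    (hne : ∀ s ∈ Set.Icc (0:ℝ) 1, deriv g s ≠ 0) (h0 : 0 < deriv g 0) :
    ∀ s ∈ Set.Icc (0:ℝ) 1, 0 < deriv g s := by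
  intro s hs
  rcases (hne s hs).lt_or_gt with hneg | hpos
  · exfalso
    have hsub : Set.uIcc (0:ℝ) s ⊆ Set.Icc (0:ℝ) 1 := by
      rw [Set.uIcc_of_le hs.1]
      exact Set.Icc_subset_Icc le_rfl hs.2
    have h0mem : (0:ℝ) ∈ Set.uIcc (deriv g 0) (deriv g s) :=
      Set.mem_uIcc.2 (Or.inr ⟨hneg.le, h0.le⟩)
    obtain ⟨r, hr, hr0⟩ := intermediate_value_uIcc hgc.continuousOn h0mem
    exact hne r (hsub hr) hr0
  · exact hpos

lemma abs_sub_bounds {g : ℝ → ℝ} (hgd : Differentiable ℝ g)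
    (hgc : Continuous (deriv g)) {c C : ℝ} (hc : 0 ≤ c)
    (hlow : ∀ s ∈ Set.Icc (0:ℝ) 1, c ≤ |deriv g s|)
    (hupp : ∀ s ∈ Set.Icc (0:ℝ) 1, |deriv g s| ≤ C) :
    ∀ s ∈ Set.Icc (0:ℝ) 1, ∀ t ∈ Set.Icc (0:ℝ) 1,
      c * |s - t| ≤ |g s - g t| ∧ |g s - g t| ≤ C * |s - t| := by
  have hup := upper_of_abs_deriv_le hgd hupp
  rcases hc.eq_or_lt with rfl | hcpos
  · intro s hs t ht
    exact ⟨by simpa using abs_nonneg (g s - g t), hup s hs t ht⟩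
  have hne : ∀ s ∈ Set.Icc (0:ℝ) 1, deriv g s ≠ 0 := by
    intro s hs h0
    have := hlow s hs
    rw [h0, abs_zero] at this
    linarith
  have h0 : (0:ℝ) ∈ Set.Icc (0:ℝ) 1 := ⟨le_rfl, zero_le_one⟩
  rcases (hne 0 h0).lt_or_gt with hneg0 | hpos0
  · have hneg : ∀ s ∈ Set.Icc (0:ℝ) 1, 0 < deriv (fun x => -g x) s :=
      deriv_pos_of_pos_at_zero (g := fun x => -g x)
        (by rw [deriv.fun_neg']; exact hgc.neg)
        (fun s hs h0' => by
          rw [deriv.fun_neg] at h0'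
          exact hne s hs (by linarith [neg_eq_zero.1 h0']))
        (by rw [deriv.fun_neg]; linarith)
    have hlow' : ∀ s ∈ Set.Icc (0:ℝ) 1, c ≤ deriv (fun x => -g x) s := by
      intro s hs
      have h1 := hlow s hs
      have h2 := hneg s hs
      rw [deriv.fun_neg] at h2 ⊢
      rw [abs_of_neg (by linarith)] at h1
      linarith
    have hlg := lower_of_deriv_ge hgd.neg hlow'
    intro s hs t ht
    refine ⟨?_, hup s hs t ht⟩
    have h3 := hlg s hs t ht
    have h4 : |(-g s) - (-g t)| = |g s - g t| := by
      rw [show (-g s) - (-g t) = -(g s - g t) by ring, abs_neg]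
    rwa [Pi.neg_apply, Pi.neg_apply, h4] at h3
  · have hpos := deriv_pos_of_pos_at_zero hgc hne hpos0
    have hlow' : ∀ s ∈ Set.Icc (0:ℝ) 1, c ≤ deriv g s := by
      intro s hs
      have h1 := hlow s hs
      rwa [abs_of_pos (hpos s hs)] at h1
    have hlg := lower_of_deriv_ge hgd hlow'
    intro s hs t ht
    exact ⟨hlg s hs t ht, hup s hs t ht⟩

/-! the slice bound -/

section slice
variable {d : ℕ} {f : (Fin d → ℝ) → ℝ} {i : Fin d} {c C : ℝ}

lemma slice_bound (hf : ContDiff ℝ 1 f) (hc : 0 ≤ c)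
    (hlow : ∀ x ∈ unitCube d, c ≤ |pderivI f i x|)
    (hupp : ∀ x ∈ unitCube d, |pderivI f i x| ≤ C)
    {x : Fin d → ℝ} (hx : x ∈ unitCube d) :
    c^2/12 ≤ ∫ s, (uComp f i (Function.update x i s))^2 ∂mu0 ∧
      ∫ s, (uComp f i (Function.update x i s))^2 ∂mu0 ≤ C^2/12 := by
  set g : ℝ → ℝ := fun s => f (Function.update x i s) with hg
  have hgd : Differentiable ℝ g := fun s => (slice_hasDerivAt f i hf x s).differentiableAt
  have hderiv : deriv g = fun s => pderivI f i (Function.update x i s) :=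
    funext fun s => deriv_slice f i hf x s
  have hgc' : Continuous (deriv g) := by
    rw [hderiv]
    exact (pderivI_continuous f i hf).comp (continuous_const.update i continuous_id)
  have hmem : ∀ s ∈ Set.Icc (0:ℝ) 1, Function.update x i s ∈ unitCube d := by
    intro s hs
    rw [unitCube, Set.mem_Icc] at hx ⊢
    constructor <;> intro j <;> rcases eq_or_ne j i with rfl | hj
    · simpa [Function.update_self] using hs.1
    · simpa [Function.update_of_ne hj] using hx.1 j
    · simpa [Function.update_self] using hs.2
    · simpa [Function.update_of_ne hj] using hx.2 j
  have hlow' : ∀ s ∈ Set.Icc (0:ℝ) 1, c ≤ |deriv g s| := by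
    intro s hs; rw [hderiv]; exact hlow _ (hmem s hs)
  have hupp' : ∀ s ∈ Set.Icc (0:ℝ) 1, |deriv g s| ≤ C := by
    intro s hs; rw [hderiv]; exact hupp _ (hmem s hs)
  have habs := abs_sub_bounds hgd hgc' hc hlow' hupp'
  have key := oneDim hgd.continuous hc
    (fun s hs t ht => (habs s hs t ht).1) (fun s hs t ht => (habs s hs t ht).2)
  have e : ∀ s : ℝ, uComp f i (Function.update x i s) = g s - ∫ t, g t ∂mu0 := by
    intro s
    rw [uComp, mu0_eq_interval]
    congr 1
    refine intervalIntegral.integral_congr fun t _ => ?_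
    rw [Function.update_idem]
  simp_rw [e]
  exact key

end slice

section global
variable {d : ℕ} {f : (Fin d → ℝ) → ℝ} {i : Fin d} {c C : ℝ}

lemma DTot_bounds (hf : ContDiff ℝ 1 f) (hc : 0 ≤ c)
    (hlow : ∀ x ∈ unitCube d, c ≤ |pderivI f i x|)
    (hupp : ∀ x ∈ unitCube d, |pderivI f i x| ≤ C) :
    c^2/12 ≤ DTot f i ∧ DTot f i ≤ C^2/12 := by
  classical
  set p : Fin d → Prop := fun j => j = i with hp
  haveI : Unique {j : Fin d // p j} :=
    ⟨⟨⟨i, rfl⟩⟩, by rintro ⟨j, hj⟩; exact Subtype.ext hj⟩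
  set e := MeasurableEquiv.piEquivPiSubtypeProd (fun _ : Fin d => ℝ) p with he
  set νa : Measure ({j : Fin d // p j} → ℝ) := Measure.pi fun _ => mu0 with hνa
  set νb : Measure ({j : Fin d // ¬ p j} → ℝ) := Measure.pi fun _ => mu0 with hνb
  have mp : MeasurePreserving e (Measure.pi fun _ : Fin d => mu0) (νa.prod νb) := by
    rw [he, hνa, hνb]
    convert measurePreserving_piEquivPiSubtypeProd (fun _ : Fin d => mu0) p using 1
    congr 1 <;> exact measure_pi_congr _ _ _
  have hcoe : ∀ (z : ({j : Fin d // p j} → ℝ) × ({j : Fin d // ¬ p j} → ℝ)) (j : Fin d),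
      e.symm z j = if h : p j then z.1 ⟨j, h⟩ else z.2 ⟨j, h⟩ := fun z j => rfl
  set φ : (Fin d → ℝ) → ℝ := fun x => (uComp f i x)^2 with hφdef
  have hφ : Continuous φ := (uComp_continuous f i hf).pow 2
  have hInt : Integrable φ (Measure.pi fun _ : Fin d => mu0) := by
    rw [pi_mu0_eq]
    have hcmp : IsCompact (unitCube d) := by rw [unitCube]; exact isCompact_Icc
    exact hφ.continuousOn.integrableOn_compact hcmp
  have hFInt : Integrable (fun z => φ (e.symm z)) (νa.prod νb) :=
    ((mp.symm e).integrable_comp_emb e.symm.measurableEmbedding).2 hInt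
  -- the update description of e.symm
  have esymm_eq : ∀ (t : ℝ) (b : {j : Fin d // ¬ p j} → ℝ),
      e.symm (fun _ => t, b) = Function.update (e.symm (fun _ => (0:ℝ), b)) i t := by
    intro t b
    funext j
    by_cases h : p j
    · have hj : j = i := h
      subst hj
      rw [hcoe, dif_pos h, Function.update_self]
    · have hj : j ≠ i := h
      rw [hcoe, dif_neg h, Function.update_of_ne hj, hcoe, dif_neg h]
  -- inner integral over the singleton factor
  have inner_eq : ∀ b : {j : Fin d // ¬ p j} → ℝ,
      ∫ a, φ (e.symm (a, b)) ∂νa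
        = ∫ t, φ (Function.update (e.symm (fun _ => (0:ℝ), b)) i t) ∂mu0 := by
    intro b
    have mpu : MeasurePreserving (MeasurableEquiv.funUnique {j : Fin d // p j} ℝ)
        νa mu0 := by
      rw [hνa]
      convert measurePreserving_funUnique mu0 ({j : Fin d // p j}) using 1
      exact measure_pi_congr _ _ _
    have h1 : ∀ a : {j : Fin d // p j} → ℝ,
        φ (e.symm (a, b))
          = φ (Function.update (e.symm (fun _ => (0:ℝ), b)) i
              (MeasurableEquiv.funUnique {j : Fin d // p j} ℝ a)) := by
      intro a
      have ha : a = fun _ => a default := funext fun j => congrArg a (Subsingleton.elim _ _)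
      conv_lhs => rw [ha]
      rw [esymm_eq]
      rfl
    calc ∫ a, φ (e.symm (a, b)) ∂νa
        = ∫ a, (fun t => φ (Function.update (e.symm (fun _ => (0:ℝ), b)) i t))
            (MeasurableEquiv.funUnique {j : Fin d // p j} ℝ a) ∂νa := by
          exact integral_congr_ae (Filter.Eventually.of_forall h1)
      _ = _ := mpu.integral_comp'
            (fun t => φ (Function.update (e.symm (fun _ => (0:ℝ), b)) i t))
  -- xb membership
  have hae : ∀ᵐ b ∂νb, e.symm (fun _ => (0:ℝ), b) ∈ unitCube d := by
    have hS : MeasurableSet (Set.pi Set.univ fun _ : {j : Fin d // ¬ p j} => Set.Icc (0:ℝ) 1) :=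
      MeasurableSet.univ_pi fun _ => measurableSet_Icc
    have hfull : νb (Set.pi Set.univ fun _ : {j : Fin d // ¬ p j} => Set.Icc (0:ℝ) 1) = 1 := by
      rw [hνb, Measure.pi_pi]
      simp [Real.volume_Icc]
    have hcompl : νb (Set.pi Set.univ fun _ : {j : Fin d // ¬ p j} => Set.Icc (0:ℝ) 1)ᶜ = 0 := by
      rw [prob_compl_eq_one_sub hS, hfull, tsub_self]
    have hmem : ∀ᵐ b ∂νb, b ∈ Set.pi Set.univ fun _ : {j : Fin d // ¬ p j} => Set.Icc (0:ℝ) 1 := by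
      rw [MeasureTheory.ae_iff]
      exact hcompl
    filter_upwards [hmem] with b hb
    rw [cube_eq]
    intro j _
    by_cases h : p j
    · have : e.symm (fun _ => (0:ℝ), b) j = 0 := by rw [hcoe, dif_pos h]
      rw [this]
      exact ⟨le_rfl, zero_le_one⟩
    · have : e.symm (fun _ => (0:ℝ), b) j = b ⟨j, h⟩ := by rw [hcoe, dif_neg h]
      rw [this]
      exact hb ⟨j, h⟩ (Set.mem_univ _)
  -- Fubini chain
  have chain : DTot f i = ∫ b, ∫ a, φ (e.symm (a, b)) ∂νa ∂νb := by
    have e1 : DTot f i = ∫ x, φ x ∂(Measure.pi fun _ : Fin d => mu0) := by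
      rw [pi_mu0_eq]; rfl
    have e2 : ∫ x, φ x ∂(Measure.pi fun _ : Fin d => mu0)
        = ∫ z, φ (e.symm z) ∂(νa.prod νb) := ((mp.symm e).integral_comp' φ).symm
    have e3 : ∫ z, φ (e.symm z) ∂(νa.prod νb)
        = ∫ a, ∫ b, φ (e.symm (a, b)) ∂νb ∂νa := integral_prod _ hFInt
    have e4 : ∫ a, ∫ b, φ (e.symm (a, b)) ∂νb ∂νa
        = ∫ b, ∫ a, φ (e.symm (a, b)) ∂νa ∂νb :=
      integral_integral_swap hFInt
    rw [e1, e2, e3, e4]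
  have hIntLeft : Integrable (fun b => ∫ a, φ (e.symm (a, b)) ∂νa) νb :=
    hFInt.integral_prod_right
  haveI : IsProbabilityMeasure νb := by rw [hνb]; infer_instance
  constructor
  · rw [chain]
    have hbound : ∀ᵐ b ∂νb, c^2/12 ≤ ∫ a, φ (e.symm (a, b)) ∂νa := by
      filter_upwards [hae] with b hb
      rw [inner_eq b]
      exact (slice_bound hf hc hlow hupp hb).1
    calc c^2/12 = ∫ _b, c^2/12 ∂νb := by simp
      _ ≤ ∫ b, ∫ a, φ (e.symm (a, b)) ∂νa ∂νb :=
        integral_mono_ae (integrable_const _) hIntLeft hbound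
  · rw [chain]
    have hbound : ∀ᵐ b ∂νb, ∫ a, φ (e.symm (a, b)) ∂νa ≤ C^2/12 := by
      filter_upwards [hae] with b hb
      rw [inner_eq b]
      exact (slice_bound hf hc hlow hupp hb).2
    calc ∫ b, ∫ a, φ (e.symm (a, b)) ∂νa ∂νb ≤ ∫ _b, C^2/12 ∂νb :=
        integral_mono_ae hIntLeft (integrable_const _) hbound
      _ = C^2/12 := by simp

end global

end SobolAux

/-- **Theorem 1 (Sobol'–Kucherenko).** If `c ≤ |∂f/∂x_i| ≤ C` on `[0,1]^d` and the total
variance `D` is positive, then `c²/(12D) ≤ S_i^tot ≤ C²/(12D)`. -/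
theorem dgsm_constant_bounds (d : ℕ) (f : (Fin d → ℝ) → ℝ) (hf : ContDiff ℝ 1 f)
    (i : Fin d) (c C : ℝ) (hc : 0 ≤ c) (hC : 0 ≤ C)
    (hlow : ∀ x ∈ unitCube d, c ≤ |pderivI f i x|)
    (hupp : ∀ x ∈ unitCube d, |pderivI f i x| ≤ C)
    (hD : 0 < totVar f) :
    c ^ 2 / (12 * totVar f) ≤ STot f i ∧ STot f i ≤ C ^ 2 / (12 * totVar f) := by
  have hDT := SobolAux.DTot_bounds hf hc hlow hupp
  constructor
  · rw [STot, ← div_div]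
    exact (div_le_div_iff_of_pos_right hD).2 hDT.1
  · rw [STot, ← div_div]
    exact (div_le_div_iff_of_pos_right hD).2 hDT.2

end
end

section
/- Let f : [0,1]^d → ℝ be continuously differentiable and fix i ∈ {1,…,d}. Assume the total variance D > 0 and that u_i is not identically zero (equivalently D_i^tot > 0). Then the strict inequality (∫_{H^d} [f(1,z) − f(0,z)]·[f(1,z) + f(0,z) − 2f(x)] dx)² / (4 ν_i D) < S_i^tot holds (lower bound LB1). -/
open MeasureTheory Real

noncomputable section

variable {d : ℕ} {f : (Fin d → ℝ) → ℝ} {i : Fin d}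

lemma update_eq_affine (x : Fin d → ℝ) (i : Fin d) :
    (fun t : ℝ => Function.update x i t)
      = fun t : ℝ => Function.update x i 0 + t • (Pi.single i 1 : Fin d → ℝ) := by
  funext t j
  rcases eq_or_ne j i with rfl | hj
  · simp
  · simp [Function.update_apply, hj, Pi.single_apply, hj]

lemma hasDerivAt_fiber (hf : ContDiff ℝ 1 f) (x : Fin d → ℝ) (t : ℝ) :
    HasDerivAt (fun s : ℝ => f (Function.update x i s))
      (fderiv ℝ f (Function.update x i t) (Pi.single i 1)) t := by
  have h1 : HasDerivAt (fun s : ℝ => Function.update x i s) (Pi.single i 1) t := by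
    rw [update_eq_affine]
    simpa using ((hasDerivAt_id t).smul_const (Pi.single i 1 : Fin d → ℝ)).const_add
      (Function.update x i 0)
  exact ((hf.differentiable one_ne_zero).differentiableAt.hasFDerivAt.comp_hasDerivAt t h1)

lemma pderivI_eq (hf : ContDiff ℝ 1 f) (x : Fin d → ℝ) :
    pderivI f i x = fderiv ℝ f x (Pi.single i 1) := by
  have := (hasDerivAt_fiber (i := i) hf x (x i)).deriv
  rwa [Function.update_eq_self] at this

lemma continuous_pderivI (hf : ContDiff ℝ 1 f) : Continuous (pderivI f i) := by
  have : Continuous fun x => fderiv ℝ f x (Pi.single i 1) :=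
    (hf.continuous_fderiv one_ne_zero).clm_apply continuous_const
  exact this.congr fun x => (pderivI_eq hf x).symm

/-- one-dim restricted Lebesgue measure on `[0,1]` -/
def nu1 : Measure ℝ := (volume : Measure ℝ).restrict (Set.Icc 0 1)

instance : IsProbabilityMeasure nu1 := by
  constructor
  simp [nu1, Real.volume_Icc]

lemma unitCube_eq_pi (d : ℕ) : unitCube d = Set.pi Set.univ fun _ : Fin d => Set.Icc (0:ℝ) 1 := by
  rw [unitCube, Set.pi_univ_Icc]; rfl

lemma cube_measure_eq_pi (d : ℕ) :
    Measure.pi (fun _ : Fin d => nu1) = (volume : Measure (Fin d → ℝ)).restrict (unitCube d) := by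
  refine Measure.pi_eq fun s hs => ?_
  rw [unitCube_eq_pi, Measure.restrict_apply (MeasurableSet.univ_pi hs),
    ← Set.pi_inter_distrib, volume_pi, Measure.pi_pi]
  simp [nu1, Measure.restrict_apply (hs _)]

lemma map_update_measure (d : ℕ) (i : Fin d) :
    Measure.map (fun p : (Fin d → ℝ) × ℝ => Function.update p.1 i p.2)
      (((volume : Measure (Fin d → ℝ)).restrict (unitCube d)).prod nu1)
    = (volume : Measure (Fin d → ℝ)).restrict (unitCube d) := by
  rw [← cube_measure_eq_pi]
  refine (Measure.pi_eq fun s hs => ?_).symm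
  have hmeas : Measurable fun p : (Fin d → ℝ) × ℝ => Function.update p.1 i p.2 :=
    measurable_update'
  rw [Measure.map_apply hmeas (MeasurableSet.univ_pi hs)]
  have hpre : (fun p : (Fin d → ℝ) × ℝ => Function.update p.1 i p.2) ⁻¹' (Set.pi Set.univ s)
      = (Set.pi {i}ᶜ s) ×ˢ (s i) := by
    ext p
    simp only [Set.mem_preimage, Set.mem_pi, Set.mem_univ, forall_true_left, Set.mem_prod,
      Set.mem_compl_iff, Set.mem_singleton_iff]
    constructor
    · intro h
      refine ⟨fun j hj => ?_, ?_⟩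
      · have := h j; rwa [Function.update_apply, if_neg hj] at this
      · have := h i; rwa [Function.update_self] at this
    · rintro ⟨h1, h2⟩ j
      rcases eq_or_ne j i with rfl | hj
      · rwa [Function.update_self]
      · rw [Function.update_apply, if_neg hj]; exact h1 j hj
  rw [hpre, Measure.prod_prod]
  have hset : Set.pi ({i}ᶜ) s = Set.pi Set.univ (Function.update s i Set.univ) := by
    ext y
    simp only [Set.mem_pi, Set.mem_univ, forall_true_left, Set.mem_compl_iff,
      Set.mem_singleton_iff]
    constructor
    · intro h j
      rcases eq_or_ne j i with rfl | hj
      · rw [Function.update_self]; trivial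
      · rw [Function.update_apply, if_neg hj]; exact h j hj
    · intro h j hj
      have := h j; rwa [Function.update_apply, if_neg hj] at this
  rw [hset, Measure.pi_pi]
  have hupdate : ∀ j : Fin d, nu1 (Function.update s i Set.univ j)
      = Function.update (fun j => nu1 (s j)) i 1 j := by
    intro j
    rcases eq_or_ne j i with rfl | hj
    · simp
    · simp [Function.update_apply, if_neg hj]
  rw [Finset.prod_congr rfl (fun j _ => hupdate j), Finset.prod_update_of_mem (Finset.mem_univ i),
    one_mul, mul_comm, ← Finset.mul_prod_erase Finset.univ _ (Finset.mem_univ i),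
    Finset.sdiff_singleton_eq_erase]

lemma integral_nu1 (g : ℝ → ℝ) : ∫ t, g t ∂nu1 = ∫ t in (0:ℝ)..1, g t := by
  rw [intervalIntegral.integral_of_le zero_le_one, nu1, ← integral_Icc_eq_integral_Ioc]

lemma avg_integral_eq {h : (Fin d → ℝ) → ℝ} (hh : Continuous h) :
    ∫ x in unitCube d, (∫ t in (0:ℝ)..1, h (Function.update x i t)) = ∫ x in unitCube d, h x := by
  have hmeas : Measurable fun p : (Fin d → ℝ) × ℝ => Function.update p.1 i p.2 :=
    measurable_update'
  have hΦcont : Continuous fun p : (Fin d → ℝ) × ℝ => h (Function.update p.1 i p.2) :=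
    hh.comp (continuous_fst.update i continuous_snd)
  set P := ((volume : Measure (Fin d → ℝ)).restrict (unitCube d)).prod nu1 with hP
  have hPrestrict : P = ((volume : Measure (Fin d → ℝ)).prod volume).restrict
      (unitCube d ×ˢ Set.Icc (0:ℝ) 1) := by
    rw [hP, nu1, Measure.prod_restrict]
  have hK : IsCompact (unitCube d ×ˢ Set.Icc (0:ℝ) 1) := by
    rw [unitCube]; exact isCompact_Icc.prod isCompact_Icc
  obtain ⟨C, hC⟩ := hK.exists_bound_of_continuousOn hΦcont.continuousOn
  haveI : IsFiniteMeasure ((volume : Measure (Fin d → ℝ)).restrict (unitCube d)) := by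
    rw [← cube_measure_eq_pi]; infer_instance
  haveI : IsFiniteMeasure P := by rw [hP]; infer_instance
  have hint : Integrable (fun p : (Fin d → ℝ) × ℝ => h (Function.update p.1 i p.2)) P := by
    refine Integrable.mono' (integrable_const C) hΦcont.aestronglyMeasurable ?_
    rw [hPrestrict]
    filter_upwards [ae_restrict_mem ((measurableSet_Icc).prod measurableSet_Icc)] with p hp
    exact hC p hp
  have h1 : ∫ x in unitCube d, h x
      = ∫ p, h (Function.update p.1 i p.2) ∂P := by
    conv_lhs => rw [← map_update_measure d i]
    rw [integral_map hmeas.aemeasurable hh.aestronglyMeasurable]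
  rw [h1, MeasureTheory.integral_prod _ hint]
  refine setIntegral_congr_fun measurableSet_Icc fun x _ => ?_
  exact (integral_nu1 _).symm

lemma continuous_avg {h : (Fin d → ℝ) → ℝ} (hh : Continuous h) :
    Continuous fun x => ∫ t in (0:ℝ)..1, h (Function.update x i t) := by
  exact intervalIntegral.continuous_parametric_intervalIntegral_of_continuous'
    (f := fun (x : Fin d → ℝ) (t : ℝ) => h (Function.update x i t))
    (by exact hh.comp (continuous_fst.update i continuous_snd)) 0 1

lemma oneD (g g' : ℝ → ℝ) (hg : ∀ t, HasDerivAt g (g' t) t) (hg' : Continuous g') :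
    ∫ t in (0:ℝ)..1, (g 1 - g 0) * (g 1 + g 0 - 2 * g t)
      = ∫ t in (0:ℝ)..1, 2 * ((g t - ∫ s in (0:ℝ)..1, g s) * g' t) := by
  have hgc : Continuous g := by
    have : Differentiable ℝ g := fun t => (hg t).differentiableAt
    exact this.continuous
  set M := ∫ s in (0:ℝ)..1, g s with hM
  have h1 : ∫ t in (0:ℝ)..1, g' t = g 1 - g 0 :=
    intervalIntegral.integral_eq_sub_of_hasDerivAt (fun t _ => hg t)
      (hg'.intervalIntegrable 0 1)
  have h2 : ∫ t in (0:ℝ)..1, 2 * g t * g' t = g 1 ^ 2 - g 0 ^ 2 := by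
    have := intervalIntegral.integral_eq_sub_of_hasDerivAt
      (f := fun t => g t ^ 2) (f' := fun t => 2 * g t * g' t)
      (fun t _ => by simpa using ((hg t).fun_pow 2))
      (((continuous_const.mul hgc).mul hg').intervalIntegrable 0 1)
    exact this
  have hL : ∫ t in (0:ℝ)..1, (g 1 - g 0) * (g 1 + g 0 - 2 * g t)
      = (g 1 - g 0) * ((g 1 + g 0) - 2 * M) := by
    rw [intervalIntegral.integral_const_mul]
    congr 1
    rw [intervalIntegral.integral_sub intervalIntegrable_const
      ((show Continuous fun t => 2 * g t from continuous_const.mul hgc).intervalIntegrable 0 1),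
      intervalIntegral.integral_const_mul]
    simp [hM]
  have hR : ∫ t in (0:ℝ)..1, 2 * ((g t - M) * g' t)
      = (g 1 ^ 2 - g 0 ^ 2) - 2 * M * (g 1 - g 0) := by
    rw [show (fun t => 2 * ((g t - M) * g' t)) = fun t => 2 * g t * g' t - 2 * M * g' t from
      funext fun t => by ring]
    rw [intervalIntegral.integral_sub
      ((show Continuous fun t => 2 * g t * g' t from (continuous_const.mul hgc).mul hg').intervalIntegrable 0 1)
      ((show Continuous fun t => 2 * M * g' t from continuous_const.mul hg').intervalIntegrable 0 1),
      h2, intervalIntegral.integral_const_mul, h1]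
  rw [hL, hR]; ring

lemma eq_zero_of_nonneg_cont (φ : ℝ → ℝ) (hφ : Continuous φ) (h0 : ∀ t, 0 ≤ φ t)
    (hI : ∫ t in (0:ℝ)..1, φ t = 0) : ∀ t ∈ Set.Icc (0:ℝ) 1, φ t = 0 := by
  have hae : φ =ᵐ[volume.restrict (Set.Ioc (0:ℝ) 1)] 0 := by
    rw [intervalIntegral.integral_of_le zero_le_one] at hI
    exact (integral_eq_zero_iff_of_nonneg h0 (hφ.integrableOn_Ioc)).mp hI
  have hmeasN : MeasurableSet {t : ℝ | φ t ≠ 0} :=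
    (isOpen_compl_singleton.preimage hφ).measurableSet
  have hzero : volume ({t : ℝ | φ t ≠ 0} ∩ Set.Ioc 0 1) = 0 := by
    have h2 : (volume.restrict (Set.Ioc (0:ℝ) 1)) {t : ℝ | φ t ≠ 0} = 0 := by
      have h3 := hae
      rw [Filter.EventuallyEq, MeasureTheory.ae_iff] at h3
      simpa using h3
    rwa [Measure.restrict_apply hmeasN] at h2
  have hIoo : Set.EqOn φ 0 (Set.Ioo 0 1) := by
    intro t ht
    by_contra hne
    have hopen : IsOpen ({t : ℝ | φ t ≠ 0} ∩ Set.Ioo 0 1) :=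
      (isOpen_compl_singleton.preimage hφ).inter isOpen_Ioo
    have hpos : 0 < volume ({t : ℝ | φ t ≠ 0} ∩ Set.Ioo 0 1) :=
      hopen.measure_pos volume ⟨t, hne, ht⟩
    have hmono : volume ({t : ℝ | φ t ≠ 0} ∩ Set.Ioo 0 1)
        ≤ volume ({t : ℝ | φ t ≠ 0} ∩ Set.Ioc 0 1) :=
      measure_mono (Set.inter_subset_inter_right _ Set.Ioo_subset_Ioc_self)
    rw [hzero] at hmono
    exact hpos.ne' (le_antisymm hmono zero_le)
  have hclos := hIoo.closure hφ continuous_const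
  rw [closure_Ioo (by norm_num : (0:ℝ) ≠ 1)] at hclos
  exact fun t ht => hclos ht

lemma fiber_zero (G G' : ℝ → ℝ) (c : ℝ) (hG : ∀ t, HasDerivAt G (G' t) t)
    (hode : ∀ t ∈ Set.Icc (0:ℝ) 1, G' t = c * G t)
    (hint : ∫ t in (0:ℝ)..1, G t = 0) : ∀ t ∈ Set.Icc (0:ℝ) 1, G t = 0 := by
  have hGdiff : Differentiable ℝ G := fun t => (hG t).differentiableAt
  have hGc : Continuous G := hGdiff.continuous
  have hH' : ∀ t, HasDerivAt (fun t => G t * Real.exp (-(c * t)))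
      ((G' t - c * G t) * Real.exp (-(c * t))) t := by
    intro t
    have hlin : HasDerivAt (fun t : ℝ => -(c * t)) (-c) t := by
      simpa using ((hasDerivAt_id t).const_mul c).fun_neg
    have he : HasDerivAt (fun t : ℝ => Real.exp (-(c * t)))
        (Real.exp (-(c * t)) * (-c)) t := hlin.exp
    have := (hG t).fun_mul he
    exact this.congr_deriv (by ring)
  have hconst : ∀ t ∈ Set.Icc (0:ℝ) 1,
      G t * Real.exp (-(c * t)) = G 0 * Real.exp (-(c * 0)) := by
    apply constant_of_has_deriv_right_zero
    · exact (hGc.mul (Real.continuous_exp.comp (continuous_const.mul continuous_id).neg)).continuousOn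
    · intro t ht
      have h0 : (G' t - c * G t) * Real.exp (-(c * t)) = 0 := by
        rw [hode t (Set.Ico_subset_Icc_self ht)]; ring
      exact (h0 ▸ (hH' t)).hasDerivWithinAt
  have hGt : ∀ t ∈ Set.Icc (0:ℝ) 1, G t = G 0 * Real.exp (c * t) := by
    intro t ht
    have h := hconst t ht
    rw [mul_zero, neg_zero, Real.exp_zero, mul_one] at h
    have h2 := congrArg (fun y => y * Real.exp (c * t)) h
    simpa [mul_assoc, ← Real.exp_add] using h2
  have h3 : G 0 * ∫ t in (0:ℝ)..1, Real.exp (c * t) = 0 := by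
    have h4 : ∫ t in (0:ℝ)..1, G t = ∫ t in (0:ℝ)..1, G 0 * Real.exp (c * t) := by
      apply intervalIntegral.integral_congr
      intro t ht
      rw [Set.uIcc_of_le zero_le_one] at ht
      exact hGt t ht
    rw [← intervalIntegral.integral_const_mul, ← h4, hint]
  have hpos : 0 < ∫ t in (0:ℝ)..1, Real.exp (c * t) :=
    intervalIntegral.intervalIntegral_pos_of_pos
      ((Real.continuous_exp.comp (continuous_const.mul continuous_id)).intervalIntegrable 0 1)
      (fun t => Real.exp_pos _) zero_lt_one
  have hG0 : G 0 = 0 := by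
    rcases mul_eq_zero.mp h3 with h | h
    · exact h
    · exact absurd h hpos.ne'
  intro t ht
  rw [hGt t ht, hG0, zero_mul]


/-- **Theorem 2 (lower bound LB1).** For `f` continuously differentiable on the unit cube with
`D > 0` and `u_i` not identically zero (i.e. `D_i^tot > 0`), one has the strict lower bound
`(∫ [f(1,z) − f(0,z)]·[f(1,z) + f(0,z) − 2f(x)] dx)² / (4 ν_i D) < S_i^tot`. -/
theorem dgsm_lower_bound_LB1 (d : ℕ) (f : (Fin d → ℝ) → ℝ) (hf : ContDiff ℝ 1 f)
    (i : Fin d) (hD : 0 < totVar f) (hui : 0 < DTot f i) :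
    (∫ x in unitCube d,
        (f (Function.update x i 1) - f (Function.update x i 0)) *
          (f (Function.update x i 1) + f (Function.update x i 0) - 2 * f x)) ^ 2 /
      (4 * nuDGSM f i * totVar f) < STot f i := by
  classical
  have hfc : Continuous f := hf.continuous
  set u := uComp f i with hu
  set p := pderivI f i with hp
  have hpc : Continuous p := continuous_pderivI hf
  have havgc : Continuous fun x : Fin d → ℝ => ∫ t in (0:ℝ)..1, f (Function.update x i t) :=
    continuous_avg hfc
  have huc : Continuous u := hfc.sub havgc
  have hupd : ∀ x : Fin d → ℝ, Continuous fun t : ℝ => Function.update x i t := fun x =>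
    continuous_const.update i continuous_id
  have hfib : ∀ (x : Fin d → ℝ) (t : ℝ),
      HasDerivAt (fun s => f (Function.update x i s)) (p (Function.update x i t)) t := by
    intro x t
    have h1 := hasDerivAt_fiber (i := i) hf x t
    rwa [hp, pderivI_eq hf (Function.update x i t)]
  have hufib : ∀ (x : Fin d → ℝ) (t : ℝ),
      u (Function.update x i t)
        = f (Function.update x i t) - ∫ s in (0:ℝ)..1, f (Function.update x i s) := by
    intro x t
    simp [hu, uComp, Function.update_idem]
  have hIcube : ∀ {h : (Fin d → ℝ) → ℝ}, Continuous h → IntegrableOn h (unitCube d) volume := by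
    intro h hh
    exact hh.continuousOn.integrableOn_compact (show IsCompact (unitCube d) from isCompact_Icc)
  -- Step 1 : the integral equals `2 * S` with `S = ∫ u * p`.
  set S := ∫ x in unitCube d, u x * p x with hS
  set Dt := DTot f i with hDt
  set νv := nuDGSM f i with hνv
  set D := totVar f with hDdef
  have hScont : Continuous fun x => 2 * (u x * p x) := continuous_const.mul (huc.mul hpc)
  have hBcont : Continuous fun x : Fin d → ℝ =>
      (f (Function.update x i 1) - f (Function.update x i 0)) *
        (f (Function.update x i 1) + f (Function.update x i 0) - 2 * f x) := by
    have h1 : Continuous fun x : Fin d → ℝ => f (Function.update x i 1) :=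
      hfc.comp (continuous_id.update i continuous_const)
    have h0 : Continuous fun x : Fin d → ℝ => f (Function.update x i 0) :=
      hfc.comp (continuous_id.update i continuous_const)
    exact (h1.sub h0).mul ((h1.add h0).sub (continuous_const.mul hfc))
  have hpt : ∀ x : Fin d → ℝ,
      (∫ t in (0:ℝ)..1,
        (f (Function.update (Function.update x i t) i 1)
            - f (Function.update (Function.update x i t) i 0)) *
          (f (Function.update (Function.update x i t) i 1)
              + f (Function.update (Function.update x i t) i 0)
            - 2 * f (Function.update x i t)))
        = ∫ t in (0:ℝ)..1, 2 * (u (Function.update x i t) * p (Function.update x i t)) := by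
    intro x
    have h1 := oneD (fun t => f (Function.update x i t)) (fun t => p (Function.update x i t))
      (hfib x) (hpc.comp (hupd x))
    simp only [Function.update_idem] at h1 ⊢
    rw [h1]
    apply intervalIntegral.integral_congr
    intro t _
    simp only [hufib]
  have hL1 := avg_integral_eq (i := i) hBcont
  have hL2 := avg_integral_eq (i := i) hScont
  have hmid : (∫ x in unitCube d, ∫ t in (0:ℝ)..1,
        (f (Function.update (Function.update x i t) i 1)
            - f (Function.update (Function.update x i t) i 0)) *
          (f (Function.update (Function.update x i t) i 1)
              + f (Function.update (Function.update x i t) i 0)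
            - 2 * f (Function.update x i t)))
      = ∫ x in unitCube d, ∫ t in (0:ℝ)..1,
          2 * (u (Function.update x i t) * p (Function.update x i t)) :=
    setIntegral_congr_fun (show MeasurableSet (unitCube d) from measurableSet_Icc)
      fun x _ => hpt x
  have hA : (∫ x in unitCube d,
      (f (Function.update x i 1) - f (Function.update x i 0)) *
        (f (Function.update x i 1) + f (Function.update x i 0) - 2 * f x)) = 2 * S := by
    rw [← hL1, hmid, hL2, hS, ← MeasureTheory.integral_const_mul]
  rw [hA]
  -- Step 2 : quadratic form
  set c := S / Dt with hc
  set Q := ∫ x in unitCube d, (p x - c * u x) ^ 2 with hQdef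
  have hQnonneg : 0 ≤ Q :=
    setIntegral_nonneg (show MeasurableSet (unitCube d) from measurableSet_Icc)
      fun x _ => sq_nonneg _
  have hQexp : Q = νv - 2 * c * S + c ^ 2 * Dt := by
    have hfun : (fun x => (p x - c * u x) ^ 2)
        = fun x => (p x ^ 2 - 2 * c * (u x * p x)) + c ^ 2 * u x ^ 2 :=
      funext fun x => by ring
    have hint1 : IntegrableOn (fun x => p x ^ 2 - 2 * c * (u x * p x)) (unitCube d) volume :=
      hIcube ((hpc.pow 2).sub (continuous_const.mul (huc.mul hpc)))
    have hint2 : IntegrableOn (fun x => c ^ 2 * u x ^ 2) (unitCube d) volume :=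
      hIcube (continuous_const.mul (huc.pow 2))
    have hint3 : IntegrableOn (fun x => p x ^ 2) (unitCube d) volume := hIcube (hpc.pow 2)
    have hint4 : IntegrableOn (fun x => 2 * c * (u x * p x)) (unitCube d) volume :=
      hIcube (continuous_const.mul (huc.mul hpc))
    rw [hQdef, hfun, MeasureTheory.integral_add hint1 hint2,
      MeasureTheory.integral_sub hint3 hint4,
      MeasureTheory.integral_const_mul, MeasureTheory.integral_const_mul]
    rw [hνv, nuDGSM, hDt, DTot, ← hS, ← hu, ← hp]
  have hQDt : Q * Dt = νv * Dt - S ^ 2 := by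
    rw [hQexp, hc]
    field_simp
    ring
  rcases eq_or_lt_of_le hQnonneg with hQ | hQ
  · -- degenerate case : contradiction with `DTot > 0`
    exfalso
    have hhcont : Continuous fun x => (p x - c * u x) ^ 2 :=
      (hpc.sub (continuous_const.mul huc)).pow 2
    have havg0 : (∫ x in unitCube d, ∫ t in (0:ℝ)..1,
        (p (Function.update x i t) - c * u (Function.update x i t)) ^ 2) = 0 := by
      rw [avg_integral_eq (i := i) hhcont]
      exact hQ.symm
    have hFcont : Continuous fun x => ∫ t in (0:ℝ)..1,
        (p (Function.update x i t) - c * u (Function.update x i t)) ^ 2 :=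
      continuous_avg hhcont
    have hFae : (fun x => ∫ t in (0:ℝ)..1,
        (p (Function.update x i t) - c * u (Function.update x i t)) ^ 2)
        =ᵐ[volume.restrict (unitCube d)] 0 := by
      refine (integral_eq_zero_iff_of_nonneg ?_ (hIcube hFcont)).mp havg0
      intro x
      exact intervalIntegral.integral_nonneg zero_le_one fun t _ => sq_nonneg _
    have hu0 : ∀ᵐ x ∂(volume.restrict (unitCube d)), u x = 0 := by
      filter_upwards [hFae,
        ae_restrict_mem (show MeasurableSet (unitCube d) from measurableSet_Icc)]
        with x hFx hxmem
      have hφcont : Continuous fun t =>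
          (p (Function.update x i t) - c * u (Function.update x i t)) ^ 2 :=
        ((hpc.comp (hupd x)).sub (continuous_const.mul (huc.comp (hupd x)))).pow 2
      have hzero := eq_zero_of_nonneg_cont _ hφcont (fun t => sq_nonneg _) hFx
      have hGder : ∀ t, HasDerivAt (fun s => u (Function.update x i s))
          (p (Function.update x i t)) t := by
        intro t
        have h1 := (hfib x t).sub_const (∫ s' in (0:ℝ)..1, f (Function.update x i s'))
        have h2 : (fun s => u (Function.update x i s))
            = fun s => f (Function.update x i s)
                - ∫ s' in (0:ℝ)..1, f (Function.update x i s') :=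
          funext (hufib x)
        rw [h2]
        exact h1
      have hode : ∀ t ∈ Set.Icc (0:ℝ) 1,
          p (Function.update x i t) = c * u (Function.update x i t) := by
        intro t ht
        have h3 := hzero t ht
        have h4 := (pow_eq_zero_iff two_ne_zero).mp h3
        linarith [h4]
      have hintG : ∫ t in (0:ℝ)..1, u (Function.update x i t) = 0 := by
        have h5 : ∫ t in (0:ℝ)..1, u (Function.update x i t)
            = ∫ t in (0:ℝ)..1, (f (Function.update x i t)
                - ∫ s' in (0:ℝ)..1, f (Function.update x i s')) := by
          apply intervalIntegral.integral_congr
          intro t _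
          exact hufib x t
        have hcf : Continuous fun t : ℝ => f (Function.update x i t) := hfc.comp (hupd x)
        rw [h5, intervalIntegral.integral_sub
          (hcf.intervalIntegrable 0 1) intervalIntegrable_const,
          intervalIntegral.integral_const]
        simp
      have hGzero := fiber_zero (fun t => u (Function.update x i t))
        (fun t => p (Function.update x i t)) c hGder hode hintG
      have hx_i : x i ∈ Set.Icc (0:ℝ) 1 := ⟨hxmem.1 i, hxmem.2 i⟩
      have h6 := hGzero (x i) hx_i
      simp only [Function.update_eq_self] at h6
      exact h6
    have hDt0 : Dt = 0 := by
      have h7 : ∫ x in unitCube d, u x ^ 2 = ∫ x in unitCube d, (0:ℝ) := by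
        apply integral_congr_ae
        filter_upwards [hu0] with x hx
        rw [hx]
        norm_num
      rw [hDt, DTot]
      simpa using h7
    rw [hDt0] at hui
    exact lt_irrefl 0 hui
  · -- main case : strict Cauchy–Schwarz
    have key : S ^ 2 < νv * Dt := by nlinarith [mul_pos hQ hui]
    have hν : 0 < νv := by
      by_contra h
      push_neg at h
      nlinarith [sq_nonneg S, mul_nonneg (neg_nonneg.mpr h) hui.le]
    have hSTot : STot f i = Dt / D := rfl
    rw [hSTot, div_lt_div_iff₀ (by positivity) hD]
    nlinarith [mul_lt_mul_of_pos_right key hD]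
end
end

section
/- Let f : [0,1]^d → ℝ be continuously differentiable, fix i ∈ {1,…,d} and a constant m > 0. Assume the total variance D > 0 and that u_i is not identically zero (equivalently D_i^tot > 0). Then γ(m) := (2m+1)·[∫_{H^d} (f(1,z) − f(x)) dx − w_i^{(m+1)}]² / ((m+1)² D) < S_i^tot (lower bound LB2). -/
open MeasureTheory Real

noncomputable section

/-! ### Auxiliary lemmas -/

section Aux

open Set intervalIntegral

/-- The reference probability measure on `[0,1]`. -/
abbrev LB2nu : Measure ℝ := volume.restrict (Set.Icc 0 1)

instance : IsProbabilityMeasure LB2nu := by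
  constructor; rw [Measure.restrict_apply_univ, Real.volume_Icc]; norm_num

lemma LB2cube_eq_pi (d : ℕ) :
    unitCube d = Set.pi Set.univ (fun _ : Fin d => Set.Icc (0:ℝ) 1) := by
  rw [unitCube, ← Set.pi_univ_Icc]; rfl

lemma LB2pi_nu_eq (d : ℕ) :
    Measure.pi (fun _ : Fin d => LB2nu) = volume.restrict (unitCube d) := by
  refine Measure.pi_eq fun s hs => ?_
  rw [LB2cube_eq_pi, Measure.restrict_apply (MeasurableSet.univ_pi hs), ← Set.pi_inter_distrib,
    volume_pi_pi]
  simp [Measure.restrict_apply (hs _)]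

lemma LB2volume_cube (d : ℕ) : volume (unitCube d) = 1 := by
  rw [LB2cube_eq_pi, volume_pi_pi]
  simp [Real.volume_Icc]

lemma LB2map_update_eq (d : ℕ) (i : Fin d) :
    Measure.map (fun p : (Fin d → ℝ) × ℝ => Function.update p.1 i p.2)
      ((volume.restrict (unitCube d)).prod LB2nu) = volume.restrict (unitCube d) := by
  rw [← LB2pi_nu_eq]
  refine (Measure.pi_eq fun s hs => ?_).symm
  have hT : Measurable (fun p : (Fin d → ℝ) × ℝ => Function.update p.1 i p.2) :=
    measurable_update'
  rw [Measure.map_apply hT (MeasurableSet.univ_pi hs)]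
  have hpre : (fun p : (Fin d → ℝ) × ℝ => Function.update p.1 i p.2) ⁻¹' (Set.pi Set.univ s)
      = (Set.pi Set.univ (Function.update s i Set.univ)) ×ˢ (s i) := by
    ext ⟨x, t⟩
    simp only [Set.mem_preimage, Set.mem_pi, Set.mem_univ, forall_true_left, Set.mem_prod]
    constructor
    · intro h
      refine ⟨fun j => ?_, by simpa using h i⟩
      rcases eq_or_ne j i with rfl | hj
      · simp
      · simpa [Function.update_of_ne hj] using h j
    · rintro ⟨h1, h2⟩ j
      rcases eq_or_ne j i with rfl | hj
      · simpa using h2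
      · have := h1 j
        simpa [Function.update_of_ne hj] using this
  rw [hpre, Measure.prod_prod, Measure.pi_pi]
  have : ∀ j, LB2nu (Function.update s i Set.univ j)
      = Function.update (fun j => LB2nu (s j)) i 1 j := by
    intro j
    rcases eq_or_ne j i with rfl | hj
    · simp
    · simp [Function.update_of_ne hj]
  rw [Finset.prod_congr rfl (fun j _ => this j), Finset.prod_update_of_mem (Finset.mem_univ i),
    one_mul]
  rw [← Finset.prod_erase_mul Finset.univ _ (Finset.mem_univ i)]
  rw [Finset.sdiff_singleton_eq_erase]

lemma LB2integrableOn_cube {d : ℕ} {g : (Fin d → ℝ) → ℝ} (hg : Continuous g) :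
    IntegrableOn g (unitCube d) volume :=
  hg.continuousOn.integrableOn_compact (isCompact_Icc (a := (0 : Fin d → ℝ)) (b := 1))

/-- Averaging over the `i`-th coordinate leaves the integral over the cube unchanged. -/
lemma LB2avg (d : ℕ) (i : Fin d) {g : (Fin d → ℝ) → ℝ} (hg : Continuous g) :
    ∫ x in unitCube d, g x
      = ∫ x in unitCube d, ∫ t in Set.Icc (0:ℝ) 1, g (Function.update x i t) := by
  have hmap := LB2map_update_eq d i
  have hT : Measurable (fun p : (Fin d → ℝ) × ℝ => Function.update p.1 i p.2) :=
    measurable_update'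
  have hint : Integrable (fun p : (Fin d → ℝ) × ℝ => g (Function.update p.1 i p.2))
      ((volume.restrict (unitCube d)).prod (volume.restrict (Set.Icc (0:ℝ) 1))) := by
    rw [Measure.prod_restrict, ← MeasureTheory.Measure.volume_eq_prod]
    exact (hg.comp (continuous_fst.update i continuous_snd)).continuousOn.integrableOn_compact
      ((isCompact_Icc (a := (0 : Fin d → ℝ)) (b := 1)).prod isCompact_Icc)
  calc ∫ x in unitCube d, g x
      = ∫ p : (Fin d → ℝ) × ℝ, g (Function.update p.1 i p.2)
          ∂((volume.restrict (unitCube d)).prod (volume.restrict (Set.Icc (0:ℝ) 1))) := by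
        have h1 := integral_map (μ := (volume.restrict (unitCube d)).prod
            (volume.restrict (Set.Icc (0:ℝ) 1))) (f := g) hT.aemeasurable
          (by rw [hmap]; exact hg.aestronglyMeasurable.restrict)
        rw [hmap] at h1
        exact h1
    _ = ∫ x in unitCube d, ∫ t in Set.Icc (0:ℝ) 1, g (Function.update x i t) :=
        MeasureTheory.integral_prod _ hint

section Deriv

variable {d : ℕ} {f : (Fin d → ℝ) → ℝ} (hf : ContDiff ℝ 1 f) (i : Fin d)
include hf

lemma LB2hasDerivAt_slice (x : Fin d → ℝ) (t : ℝ) :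
    HasDerivAt (fun s => f (Function.update x i s))
      (fderiv ℝ f (Function.update x i t) (Pi.single i 1)) t :=
  (((hf.differentiable one_ne_zero) _).hasFDerivAt).comp_hasDerivAt t (hasDerivAt_update x i t)

lemma LB2pderiv_eq (x : Fin d → ℝ) :
    pderivI f i x = fderiv ℝ f x (Pi.single i 1) := by
  have h := LB2hasDerivAt_slice hf i x (x i)
  rw [Function.update_eq_self] at h
  exact h.deriv

lemma LB2cont_pderiv : Continuous (pderivI f i) := by
  have : Continuous fun x => fderiv ℝ f x (Pi.single i 1) :=
    (hf.continuous_fderiv one_ne_zero).clm_apply continuous_const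
  simpa [funext (LB2pderiv_eq hf i)] using this

lemma LB2cont_uComp : Continuous (uComp f i) := by
  refine hf.continuous.sub ?_
  exact intervalIntegral.continuous_parametric_intervalIntegral_of_continuous'
    (f := fun x t => f (Function.update x i t))
    (hf.continuous.comp (continuous_fst.update i continuous_snd)) 0 1

omit hf in
lemma LB2uComp_update (x : Fin d → ℝ) (t : ℝ) :
    uComp f i (Function.update x i t)
      = f (Function.update x i t) - ∫ s in (0:ℝ)..1, f (Function.update x i s) := by
  simp [uComp, Function.update_idem]

end Deriv

lemma LB2cont_rpow {m : ℝ} (hm : 0 < m) : Continuous fun t : ℝ => t ^ m :=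
  continuous_id.rpow_const fun _ => Or.inr hm.le

lemma LB2int_rpow {m : ℝ} (hm : 0 < m) : ∫ t in (0:ℝ)..1, t ^ m = 1 / (m + 1) := by
  rw [integral_rpow (Or.inl (by linarith))]
  rw [Real.one_rpow, Real.zero_rpow (by linarith)]
  ring

lemma LB2ibp {g g' : ℝ → ℝ} (hg : ∀ t, HasDerivAt g (g' t) t)
    (hg'c : Continuous g') {m : ℝ} (hm : 0 < m) :
    ∫ t in (0:ℝ)..1, t ^ (m+1) * g' t = g 1 - (m+1) * ∫ t in (0:ℝ)..1, t ^ m * g t := by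
  have h := intervalIntegral.integral_mul_deriv_eq_deriv_mul (a := (0:ℝ)) (b := 1)
    (u := fun t => t ^ (m+1)) (u' := fun t => (m+1) * t ^ m) (v := g) (v' := g')
    (fun t _ => by
      have := Real.hasDerivAt_rpow_const (x := t) (p := m+1) (Or.inr (by linarith))
      simpa [add_sub_cancel_right] using this)
    (fun t _ => hg t)
    ((continuous_const.mul (LB2cont_rpow hm)).intervalIntegrable 0 1)
    (hg'c.intervalIntegrable 0 1)
  simp only [Real.one_rpow, Real.zero_rpow (show m + 1 ≠ 0 by linarith)] at h
  rw [h, show (fun x:ℝ => (m + 1) * x ^ m * g x) = fun x:ℝ => (m+1) * (x ^ m * g x) from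
    funext fun x => by ring]
  rw [intervalIntegral.integral_const_mul]
  ring

lemma LB2slice_1d {g g' : ℝ → ℝ} (hg : ∀ t, HasDerivAt g (g' t) t) (hgc : Continuous g)
    (hg'c : Continuous g') {m : ℝ} (hm : 0 < m) :
    ∫ t in Set.Icc (0:ℝ) 1,
      ((g 1 - g t) - t ^ (m+1) * g' t - (m+1) * (t ^ m * (g t - ∫ s in (0:ℝ)..1, g s))) = 0 := by
  rw [MeasureTheory.integral_Icc_eq_integral_Ioc, ← intervalIntegral.integral_of_le zero_le_one]
  set I : ℝ := ∫ s in (0:ℝ)..1, g s with hI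
  have hgi : IntervalIntegrable g volume 0 1 := hgc.intervalIntegrable 0 1
  have htm : Continuous fun t : ℝ => t ^ m := LB2cont_rpow hm
  have h1 : ∫ t in (0:ℝ)..1, (g 1 - g t) = g 1 - I := by
    rw [intervalIntegral.integral_sub (intervalIntegrable_const) hgi]
    simp [hI]
  have h2 := LB2ibp hg hg'c hm
  have h3 : ∫ t in (0:ℝ)..1, (m+1) * (t ^ m * (g t - I))
      = (m+1) * (∫ t in (0:ℝ)..1, t ^ m * g t) - I := by
    have : ∀ t : ℝ, (m+1) * (t ^ m * (g t - I)) = (m+1) * (t ^ m * g t) - ((m+1) * I) * t ^ m := by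
      intro t; ring
    rw [intervalIntegral.integral_congr (fun t _ => this t),
      intervalIntegral.integral_sub (f := fun t => (m+1) * (t ^ m * g t))
        (g := fun t => ((m+1) * I) * t ^ m)
        ((continuous_const.mul (htm.mul hgc)).intervalIntegrable 0 1)
        ((continuous_const.mul htm).intervalIntegrable 0 1),
      intervalIntegral.integral_const_mul, intervalIntegral.integral_const_mul, LB2int_rpow hm]
    field_simp
  rw [intervalIntegral.integral_sub, intervalIntegral.integral_sub, h1, h2, h3]
  · ring
  · exact intervalIntegrable_const.sub hgi
  · exact ((LB2cont_rpow (by linarith : (0:ℝ) < m+1)).mul hg'c).intervalIntegrable 0 1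
  · exact (intervalIntegrable_const.sub hgi).sub
      (((LB2cont_rpow (by linarith : (0:ℝ) < m+1)).mul hg'c).intervalIntegrable 0 1)
  · exact (continuous_const.mul (htm.mul (hgc.sub continuous_const))).intervalIntegrable 0 1

lemma LB2center_1d {g : ℝ → ℝ} (hgc : Continuous g) :
    ∫ t in Set.Icc (0:ℝ) 1, (g t - ∫ s in (0:ℝ)..1, g s) = 0 := by
  rw [MeasureTheory.integral_Icc_eq_integral_Ioc, ← intervalIntegral.integral_of_le zero_le_one,
    intervalIntegral.integral_sub (hgc.intervalIntegrable 0 1) intervalIntegrable_const]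
  simp

lemma LB2sq_moment {m : ℝ} (hm : 0 < m) :
    ∫ t in Set.Icc (0:ℝ) 1, (t ^ m - 1/(m+1)) ^ 2 = 1/(m+m+1) - 1/(m+1)^2 := by
  rw [MeasureTheory.integral_Icc_eq_integral_Ioc, ← intervalIntegral.integral_of_le zero_le_one]
  have hcong : ∀ t ∈ Set.uIcc (0:ℝ) 1,
      (t ^ m - 1/(m+1)) ^ 2
        = t ^ (m+m) - (2/(m+1)) * t ^ m + (1/(m+1))^2 := by
    intro t ht
    rw [Set.uIcc_of_le zero_le_one] at ht
    rw [Real.rpow_add' ht.1 (by linarith : m + m ≠ 0)]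
    ring
  rw [intervalIntegral.integral_congr hcong]
  have htm : Continuous fun t : ℝ => t ^ m := LB2cont_rpow hm
  have htmm : Continuous fun t : ℝ => t ^ (m+m) := LB2cont_rpow (by linarith)
  rw [intervalIntegral.integral_add (f := fun t => t ^ (m+m) - (2/(m+1)) * t ^ m)
      (g := fun _ => (1/(m+1))^2)
      ((htmm.sub (continuous_const.mul htm)).intervalIntegrable 0 1)
      intervalIntegrable_const,
    intervalIntegral.integral_sub (f := fun t => t ^ (m+m)) (g := fun t => (2/(m+1)) * t ^ m)
      (htmm.intervalIntegrable 0 1)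
      ((continuous_const.mul htm).intervalIntegrable 0 1),
    intervalIntegral.integral_const_mul, LB2int_rpow hm, LB2int_rpow (by linarith : (0:ℝ) < m+m)]
  simp only [intervalIntegral.integral_const, smul_eq_mul, sub_zero, mul_one]
  have h1 : m + 1 ≠ 0 := by linarith
  field_simp
  ring

lemma LB2my_cs {α : Type*} [MeasurableSpace α] (μ : Measure α) {φ u : α → ℝ}
    (h1 : Integrable (fun x => φ x ^ 2) μ) (h2 : Integrable (fun x => u x ^ 2) μ)
    (h3 : Integrable (fun x => φ x * u x) μ) :
    (∫ x, φ x * u x ∂μ) ^ 2 ≤ (∫ x, φ x ^ 2 ∂μ) * (∫ x, u x ^ 2 ∂μ) := by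
  set P := ∫ x, φ x ^ 2 ∂μ with hP
  set Q := ∫ x, φ x * u x ∂μ with hQ
  set R := ∫ x, u x ^ 2 ∂μ with hR
  have key : ∀ a : ℝ, 0 ≤ P * (a * a) + (-2 * Q) * a + R := by
    intro a
    have hnn : 0 ≤ ∫ x, (a * φ x - u x) ^ 2 ∂μ := integral_nonneg fun x => sq_nonneg _
    have hexp : ∫ x, (a * φ x - u x) ^ 2 ∂μ = P * (a * a) + (-2 * Q) * a + R := by
      have hfun : (fun x => (a * φ x - u x) ^ 2)
          = fun x => (a * a) * φ x ^ 2 - (2 * a) * (φ x * u x) + u x ^ 2 :=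
        funext fun x => by ring
      have hsub : Integrable (fun x => (a * a) * φ x ^ 2 - (2 * a) * (φ x * u x)) μ :=
        (h1.const_mul _).sub (h3.const_mul _)
      rw [hfun, integral_add hsub h2,
        integral_sub (h1.const_mul _) (h3.const_mul _), MeasureTheory.integral_const_mul,
        MeasureTheory.integral_const_mul]
      ring
    linarith [hexp ▸ hnn]
  have hd := discrim_le_zero key
  rw [discrim] at hd
  nlinarith [hd]

end Aux

/-- **Theorem 3 (lower bound LB2).** For `f` continuously differentiable on the unit cube,
`m > 0`, `D > 0` and `u_i` not identically zero (i.e. `D_i^tot > 0`), the quantity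
`γ(m) = (2m+1)·[∫ (f(1,z) − f(x)) dx − w_i^{(m+1)}]² / ((m+1)² D)` is a strict lower bound
on `S_i^tot`. -/
theorem dgsm_lower_bound_LB2 (d : ℕ) (f : (Fin d → ℝ) → ℝ) (hf : ContDiff ℝ 1 f)
    (i : Fin d) (m : ℝ) (hm : 0 < m) (hD : 0 < totVar f) (hui : 0 < DTot f i) :
    (2 * m + 1) *
        ((∫ x in unitCube d, (f (Function.update x i 1) - f x)) - wDGSM f i (m + 1)) ^ 2 /
      ((m + 1) ^ 2 * totVar f) < STot f i := by
  have hm1 : (0:ℝ) < m + 1 := by linarith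
  -- continuity facts
  have hcu : Continuous (uComp f i) := LB2cont_uComp hf i
  have hcp : Continuous (pderivI f i) := LB2cont_pderiv hf i
  have hcxm : Continuous fun x : Fin d → ℝ => (x i) ^ m :=
    (continuous_apply i).rpow_const fun _ => Or.inr hm.le
  have hcxm1 : Continuous fun x : Fin d → ℝ => (x i) ^ (m+1) :=
    (continuous_apply i).rpow_const fun _ => Or.inr hm1.le
  have hc1 : Continuous fun x : Fin d → ℝ => f (Function.update x i 1) - f x :=
    (hf.continuous.comp (continuous_id.update i continuous_const)).sub hf.continuous
  -- the function h whose cube integral vanishes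
  set h : (Fin d → ℝ) → ℝ := fun x =>
    (f (Function.update x i 1) - f x) - (x i) ^ (m+1) * pderivI f i x
      - (m+1) * ((x i) ^ m * uComp f i x) with hh
  have hch : Continuous h :=
    ((hc1.sub (hcxm1.mul hcp)).sub (continuous_const.mul (hcxm.mul hcu)))
  -- slice data
  have hslice : ∀ x : Fin d → ℝ, ∫ t in Set.Icc (0:ℝ) 1, h (Function.update x i t) = 0 := by
    intro x
    set g : ℝ → ℝ := fun t => f (Function.update x i t) with hg
    set g' : ℝ → ℝ := fun t => fderiv ℝ f (Function.update x i t) (Pi.single i 1) with hg'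
    have hgd : ∀ t, HasDerivAt g (g' t) t := fun t => LB2hasDerivAt_slice hf i x t
    have hgc : Continuous g := hf.continuous.comp (continuous_const.update i continuous_id)
    have hg'c : Continuous g' :=
      (((hf.continuous_fderiv one_ne_zero).comp
        (continuous_const.update i continuous_id)).clm_apply continuous_const)
    have hfun : (fun t : ℝ => h (Function.update x i t))
        = fun t : ℝ => ((g 1 - g t) - t ^ (m+1) * g' t
            - (m+1) * (t ^ m * (g t - ∫ s in (0:ℝ)..1, g s))) := by
      funext t
      have hpd : pderivI f i (Function.update x i t) = g' t := LB2pderiv_eq hf i _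
      have huu : uComp f i (Function.update x i t) = g t - ∫ s in (0:ℝ)..1, g s :=
        LB2uComp_update i x t
      simp only [hh, Function.update_idem, Function.update_self, hpd, huu, hg]
    rw [hfun]
    exact LB2slice_1d hgd hgc hg'c hm
  -- cube integral of h is zero
  have hzero : ∫ x in unitCube d, h x = 0 := by
    rw [LB2avg d i hch]
    have : (fun x : Fin d → ℝ => ∫ t in Set.Icc (0:ℝ) 1, h (Function.update x i t))
        = fun _ => (0:ℝ) := funext hslice
    rw [this, integral_zero]
  -- split the integral of h
  have hsplit : ∫ x in unitCube d, h x
      = (∫ x in unitCube d, (f (Function.update x i 1) - f x)) - wDGSM f i (m+1)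
        - (m+1) * ∫ x in unitCube d, (x i) ^ m * uComp f i x := by
    have i1 : IntegrableOn (fun x : Fin d → ℝ => f (Function.update x i 1) - f x)
        (unitCube d) volume := LB2integrableOn_cube hc1
    have i2 : IntegrableOn (fun x : Fin d → ℝ => (x i) ^ (m+1) * pderivI f i x)
        (unitCube d) volume := LB2integrableOn_cube (hcxm1.mul hcp)
    have i3 : IntegrableOn (fun x : Fin d → ℝ => (m+1) * ((x i) ^ m * uComp f i x))
        (unitCube d) volume := LB2integrableOn_cube (continuous_const.mul (hcxm.mul hcu))
    have i12 : IntegrableOn (fun x : Fin d → ℝ =>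
        (f (Function.update x i 1) - f x) - (x i) ^ (m+1) * pderivI f i x)
        (unitCube d) volume := i1.sub i2
    rw [hh]
    rw [integral_sub i12 i3, integral_sub i1 i2, MeasureTheory.integral_const_mul]
    rfl
  -- hence the key identity
  set Qm : ℝ := ∫ x in unitCube d, (x i) ^ m * uComp f i x with hQm
  have hA : (∫ x in unitCube d, (f (Function.update x i 1) - f x)) - wDGSM f i (m+1)
      = (m+1) * Qm := by
    have := hzero
    rw [hsplit] at this
    linarith
  -- mean of u over the cube is zero
  have humean : ∫ x in unitCube d, uComp f i x = 0 := by
    rw [LB2avg d i hcu]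
    have : (fun x : Fin d → ℝ => ∫ t in Set.Icc (0:ℝ) 1, uComp f i (Function.update x i t))
        = fun _ => (0:ℝ) := by
      funext x
      have : (fun t : ℝ => uComp f i (Function.update x i t))
          = fun t : ℝ => f (Function.update x i t)
              - ∫ s in (0:ℝ)..1, f (Function.update x i s) :=
        funext fun t => LB2uComp_update i x t
      rw [this]
      exact LB2center_1d (hf.continuous.comp (continuous_const.update i continuous_id))
    rw [this, integral_zero]
  -- the centered weight φ
  set c : ℝ := 1/(m+1) with hc
  set φ : (Fin d → ℝ) → ℝ := fun x => (x i) ^ m - c with hφ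
  have hcφ : Continuous φ := hcxm.sub continuous_const
  have hQφ : ∫ x in unitCube d, φ x * uComp f i x = Qm := by
    have hfun : (fun x : Fin d → ℝ => φ x * uComp f i x)
        = fun x => (x i) ^ m * uComp f i x - c * uComp f i x := funext fun x => by
      simp only [hφ]; ring
    rw [hfun, integral_sub (f := fun x => (x i) ^ m * uComp f i x) (g := fun x => c * uComp f i x)
      (LB2integrableOn_cube (hcxm.mul hcu))
      ((LB2integrableOn_cube hcu).const_mul c), MeasureTheory.integral_const_mul, humean]
    simp [hQm]
  -- second moment of φ
  have hPφ : ∫ x in unitCube d, φ x ^ 2 = 1/(m+m+1) - 1/(m+1)^2 := by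
    rw [LB2avg d i (g := fun x => φ x ^ 2) (hcφ.pow 2)]
    have : (fun x : Fin d → ℝ => ∫ t in Set.Icc (0:ℝ) 1, (φ (Function.update x i t)) ^ 2)
        = fun _ => 1/(m+m+1) - 1/(m+1)^2 := by
      funext x
      have : (fun t : ℝ => (φ (Function.update x i t)) ^ 2)
          = fun t : ℝ => (t ^ m - 1/(m+1)) ^ 2 := by
        funext t
        simp only [hφ, Function.update_self, hc]
      rw [this]
      exact LB2sq_moment hm
    rw [this]
    rw [MeasureTheory.setIntegral_const, Measure.real, LB2volume_cube]
    simp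
  -- Cauchy–Schwarz
  have hCS : Qm ^ 2 ≤ (1/(m+m+1) - 1/(m+1)^2) * DTot f i := by
    have := LB2my_cs (volume.restrict (unitCube d))
      (φ := φ) (u := uComp f i)
      (LB2integrableOn_cube (hcφ.pow 2))
      (LB2integrableOn_cube (hcu.pow 2))
      (LB2integrableOn_cube (hcφ.mul hcu))
    rw [hQφ, hPφ] at this
    exact this
  -- final numeric assembly
  rw [hA, STot]
  have hDne : totVar f ≠ 0 := ne_of_gt hD
  have heq : (2 * m + 1) * ((m + 1) * Qm) ^ 2 / ((m + 1) ^ 2 * totVar f)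
      = ((2 * m + 1) * Qm ^ 2) / totVar f := by
    field_simp
  rw [heq, div_lt_div_iff_of_pos_right hD]
  have hkey : (2 * m + 1) * ((1/(m+m+1) - 1/(m+1)^2) * DTot f i) < DTot f i := by
    have h2m : (0:ℝ) < 2 * m + 1 := by linarith
    have hlt : (2 * m + 1) * (1/(m+m+1) - 1/(m+1)^2) < 1 := by
      have hmm : (0:ℝ) < m + m + 1 := by linarith
      have : (2 * m + 1) * (1/(m+m+1) - 1/(m+1)^2) = 1 - (2*m+1)/(m+1)^2 := by
        field_simp
        ring
      rw [this]
      have : 0 < (2*m+1)/(m+1)^2 := by positivity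
      linarith
    calc (2 * m + 1) * ((1/(m+m+1) - 1/(m+1)^2) * DTot f i)
        = ((2 * m + 1) * (1/(m+m+1) - 1/(m+1)^2)) * DTot f i := by ring
      _ < 1 * DTot f i := by exact mul_lt_mul_of_pos_right hlt hui
      _ = DTot f i := one_mul _
  calc (2 * m + 1) * Qm ^ 2
      ≤ (2 * m + 1) * ((1/(m+m+1) - 1/(m+1)^2) * DTot f i) := by
        have h2m : (0:ℝ) ≤ 2 * m + 1 := by linarith
        exact mul_le_mul_of_nonneg_left hCS h2m
    _ < DTot f i := hkey
end
end

section
/- For every continuously differentiable u : [0,1] → ℝ, ∫₀¹ u(x)² dx − (∫₀¹ u(x) dx)² ≤ (1/2)∫₀¹ x(1−x) u′(x)² dx (and the left-hand side is nonnegative); equivalently, the variance of u on [0,1] is bounded by the weighted Dirichlet integral with weight x(1−x)/2. -/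
open MeasureTheory Real

/-- Cauchy–Schwarz for interval integrals of continuous functions. -/
lemma sq_intervalIntegral_le (f : ℝ → ℝ) (hf : Continuous f) {a b : ℝ} (hab : a ≤ b) :
    (∫ t in a..b, f t) ^ 2 ≤ (b - a) * ∫ t in a..b, (f t) ^ 2 := by
  rcases eq_or_lt_of_le hab with rfl | hlt
  · simp
  have hL0 : 0 < b - a := sub_pos.2 hlt
  set I := ∫ t in a..b, f t with hI
  set J := ∫ t in a..b, (f t) ^ 2 with hJ
  set c : ℝ := I / (b - a) with hc
  have h0 : 0 ≤ ∫ t in a..b, (f t - c) ^ 2 :=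
    intervalIntegral.integral_nonneg hab (fun t _ => sq_nonneg _)
  have hexp : ∫ t in a..b, (f t - c) ^ 2 = J - 2 * c * I + c ^ 2 * (b - a) := by
    have e : (fun t => (f t - c) ^ 2)
        = fun t => (f t) ^ 2 + ((-(2 * c)) * f t + c ^ 2) := by
      funext t; ring
    rw [e, intervalIntegral.integral_add
        (show IntervalIntegrable (fun t => f t ^ 2) MeasureTheory.volume a b from
          (hf.pow 2).intervalIntegrable a b)
        (show IntervalIntegrable (fun t => -(2 * c) * f t + c ^ 2) MeasureTheory.volume a b from
          ((continuous_const.mul hf).add continuous_const).intervalIntegrable a b),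
      intervalIntegral.integral_add
        (show IntervalIntegrable (fun t => -(2 * c) * f t) MeasureTheory.volume a b from
          (continuous_const.mul hf).intervalIntegrable a b)
        (show IntervalIntegrable (fun _ => c ^ 2) MeasureTheory.volume a b from
          continuous_const.intervalIntegrable a b),
      intervalIntegral.integral_const_mul, intervalIntegral.integral_const]
    simp only [smul_eq_mul, ← hI, ← hJ]
    ring
  rw [hexp] at h0
  have hrw : 2 * c * I - c ^ 2 * (b - a) = I ^ 2 / (b - a) := by
    rw [hc]; field_simp; ring
  have h2 : I ^ 2 / (b - a) ≤ J := by nlinarith [h0, hrw]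
  calc I ^ 2 = (I ^ 2 / (b - a)) * (b - a) := by field_simp
  _ ≤ J * (b - a) := mul_le_mul_of_nonneg_right h2 (le_of_lt hL0)
  _ = (b - a) * J := by ring

/-- **Hardy–Littlewood–Pólya weighted Poincaré inequality.** For a continuously
differentiable `u : [0,1] → ℝ`, the variance of `u` on `[0,1]` is nonnegative and bounded
by the weighted Dirichlet integral `1/2 ∫₀¹ x(1−x) u′(x)² dx`. -/
theorem variance_le_weighted_dirichlet (u : ℝ → ℝ) (hu : ContDiff ℝ 1 u) :
    0 ≤ (∫ x in Set.Icc (0:ℝ) 1, (u x) ^ 2) - (∫ x in Set.Icc (0:ℝ) 1, u x) ^ 2 ∧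
      (∫ x in Set.Icc (0:ℝ) 1, (u x) ^ 2) - (∫ x in Set.Icc (0:ℝ) 1, u x) ^ 2 ≤
        (1 / 2) * ∫ x in Set.Icc (0:ℝ) 1, x * (1 - x) * (deriv u x) ^ 2 := by
  have hcu : Continuous u := hu.continuous
  have hcd : Continuous (deriv u) := hu.continuous_deriv le_rfl
  set g : ℝ → ℝ := fun t => (deriv u t) ^ 2 with hgdef
  have hg : Continuous g := hcd.pow 2
  set H : ℝ → ℝ := fun t => ∫ s in (0:ℝ)..t, g s with hHdef
  have hHd : ∀ x : ℝ, HasDerivAt H (g x) x := fun x =>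
    (hg.integral_hasStrictDerivAt 0 x).hasDerivAt
  have hH : Continuous H :=
    continuous_iff_continuousAt.2 fun x => (hHd x).continuousAt
  -- key pointwise inequality
  have base : ∀ x y : ℝ, y ≤ x → (u x - u y) ^ 2 ≤ (x - y) * (H x - H y) := by
    intro x y hyx
    have h1 : u x - u y = ∫ t in y..x, deriv u t :=
      (intervalIntegral.integral_deriv_eq_sub
        (fun t _ => (hu.differentiable one_ne_zero) t)
        (hcd.intervalIntegrable _ _)).symm
    have h2 : H x - H y = ∫ t in y..x, g t := by
      simp only [hHdef]
      exact intervalIntegral.integral_interval_sub_left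
        (hg.intervalIntegrable _ _) (hg.intervalIntegrable _ _)
    rw [h1, h2]
    exact sq_intervalIntegral_le (deriv u) hcd hyx
  have key : ∀ x y : ℝ, (u x - u y) ^ 2 ≤ (x - y) * (H x - H y) := by
    intro x y
    rcases le_total y x with h | h
    · exact base x y h
    · calc (u x - u y) ^ 2 = (u y - u x) ^ 2 := by ring
      _ ≤ (y - x) * (H y - H x) := base y x h
      _ = (x - y) * (H x - H y) := by ring
  -- measure-theoretic bookkeeping
  have hmeas : MeasurableSet (Set.Icc (0:ℝ) 1) := measurableSet_Icc
  have hvol : (volume (Set.Icc (0:ℝ) 1)).toReal = 1 := by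
    simp [Real.volume_Icc]
  have icc_eq : ∀ f : ℝ → ℝ,
      (∫ x in Set.Icc (0:ℝ) 1, f x) = ∫ x in (0:ℝ)..1, f x := by
    intro f
    rw [intervalIntegral.integral_of_le zero_le_one,
      MeasureTheory.integral_Icc_eq_integral_Ioc]
  have hconst : ∀ c : ℝ, (∫ _x in Set.Icc (0:ℝ) 1, c) = c := by
    intro c
    rw [setIntegral_const, measureReal_def, hvol, one_smul]
  have hid : (∫ x in Set.Icc (0:ℝ) 1, x) = 1 / 2 := by
    rw [icc_eq]
    simp
  set Iu : ℝ := ∫ x in Set.Icc (0:ℝ) 1, u x with hIu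
  set Iu2 : ℝ := ∫ x in Set.Icc (0:ℝ) 1, (u x) ^ 2 with hIu2
  set IH : ℝ := ∫ x in Set.Icc (0:ℝ) 1, H x with hIH
  set XH : ℝ := ∫ x in Set.Icc (0:ℝ) 1, x * H x with hXH
  -- inner integral: LHS
  have inner1 : ∀ x : ℝ, (∫ y in Set.Icc (0:ℝ) 1, (u x - u y) ^ 2)
      = (u x) ^ 2 - 2 * u x * Iu + Iu2 := by
    intro x
    have e : (fun y => (u x - u y) ^ 2)
        = fun y => ((u x) ^ 2 + (-(2 * u x)) * u y) + (u y) ^ 2 := by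
      funext y; ring
    rw [e, integral_add (Continuous.integrableOn_Icc (by fun_prop))
        (Continuous.integrableOn_Icc (by fun_prop)),
      integral_add (Continuous.integrableOn_Icc (by fun_prop))
        (Continuous.integrableOn_Icc (by fun_prop)),
      integral_const_mul, hconst]
    rw [← hIu, ← hIu2]
    ring
  -- inner integral: RHS
  have inner2 : ∀ x : ℝ, (∫ y in Set.Icc (0:ℝ) 1, (x - y) * (H x - H y))
      = x * H x - x * IH - H x * (1 / 2) + XH := by
    intro x
    have e : (fun y => (x - y) * (H x - H y))
        = fun y => ((x * H x + (-x) * H y) + ((-(H x)) * y + y * H y)) := by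
      funext y; ring
    rw [e, integral_add (Continuous.integrableOn_Icc (by fun_prop))
        (Continuous.integrableOn_Icc (by fun_prop)),
      integral_add (Continuous.integrableOn_Icc (by fun_prop))
        (Continuous.integrableOn_Icc (by fun_prop)),
      integral_add (Continuous.integrableOn_Icc (by fun_prop))
        (Continuous.integrableOn_Icc (by fun_prop)),
      integral_const_mul, integral_const_mul, integral_const_mul, hconst, hid]
    rw [← hIH, ← hXH]
    ring
  -- nonnegativity
  have hDnn : 0 ≤ ∫ x in Set.Icc (0:ℝ) 1, ((u x) ^ 2 - 2 * u x * Iu + Iu2) := by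
    apply setIntegral_nonneg hmeas
    intro x _
    rw [← inner1 x]
    exact setIntegral_nonneg hmeas (fun y _ => sq_nonneg _)
  have hDval : (∫ x in Set.Icc (0:ℝ) 1, ((u x) ^ 2 - 2 * u x * Iu + Iu2))
      = 2 * (Iu2 - Iu ^ 2) := by
    have e : (fun x => (u x) ^ 2 - 2 * u x * Iu + Iu2)
        = fun x => ((u x) ^ 2 + (-(2 * Iu)) * u x) + Iu2 := by
      funext x; ring
    rw [e, integral_add (Continuous.integrableOn_Icc (by fun_prop))
        (Continuous.integrableOn_Icc (by fun_prop)),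
      integral_add (Continuous.integrableOn_Icc (by fun_prop))
        (Continuous.integrableOn_Icc (by fun_prop)),
      integral_const_mul, hconst]
    rw [← hIu, ← hIu2]
    ring
  have hvar_nn : 0 ≤ Iu2 - Iu ^ 2 := by
    rw [hDval] at hDnn; linarith
  -- monotonicity of outer integral
  have houter : (∫ x in Set.Icc (0:ℝ) 1, ((u x) ^ 2 - 2 * u x * Iu + Iu2))
      ≤ ∫ x in Set.Icc (0:ℝ) 1, (x * H x - x * IH - H x * (1 / 2) + XH) := by
    apply setIntegral_mono_on
    · exact Continuous.integrableOn_Icc (by fun_prop)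
    · exact Continuous.integrableOn_Icc (by fun_prop)
    · exact hmeas
    · intro x _
      rw [← inner1 x, ← inner2 x]
      apply setIntegral_mono_on
      · exact Continuous.integrableOn_Icc (by fun_prop)
      · exact Continuous.integrableOn_Icc (by fun_prop)
      · exact hmeas
      · intro y _
        exact key x y
  -- compute the RHS outer integral
  have hRHSval : (∫ x in Set.Icc (0:ℝ) 1, (x * H x - x * IH - H x * (1 / 2) + XH))
      = 2 * XH - IH := by
    have e : (fun x => x * H x - x * IH - H x * (1 / 2) + XH)
        = fun x => ((x * H x + (-IH) * x) + ((-(1/2)) * H x + XH)) := by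
      funext x; ring
    rw [e, integral_add (Continuous.integrableOn_Icc (by fun_prop))
        (Continuous.integrableOn_Icc (by fun_prop)),
      integral_add (Continuous.integrableOn_Icc (by fun_prop))
        (Continuous.integrableOn_Icc (by fun_prop)),
      integral_add (Continuous.integrableOn_Icc (by fun_prop))
        (Continuous.integrableOn_Icc (by fun_prop)),
      integral_const_mul, integral_const_mul, hconst, hid]
    rw [← hIH, ← hXH]
    ring
  -- integration by parts: 2*XH - IH = ∫ x(1-x) g
  have hparts : 2 * XH - IH = ∫ x in Set.Icc (0:ℝ) 1, x * (1 - x) * g x := by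
    have hv : ∀ x ∈ Set.uIcc (0:ℝ) 1, HasDerivAt (fun t : ℝ => t ^ 2 - t) (2 * x - 1) x := by
      intro x _
      simpa [Pi.sub_def] using ((hasDerivAt_pow 2 x).sub (hasDerivAt_id' x))
    have hparts0 := intervalIntegral.integral_mul_deriv_eq_deriv_mul
      (u := H) (v := fun t : ℝ => t ^ 2 - t) (u' := g) (v' := fun t => 2 * t - 1)
      (fun x _ => hHd x) hv (hg.intervalIntegrable 0 1)
      (((continuous_const.mul continuous_id).sub continuous_const).intervalIntegrable 0 1)
    simp only [hHdef] at hparts0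
    have hH0 : H 0 = 0 := by simp [hHdef]
    have h1 : (∫ x in (0:ℝ)..1, H x * (2 * x - 1))
        = - ∫ x in (0:ℝ)..1, g x * (x ^ 2 - x) := by
      simp only [hHdef] at *
      rw [hparts0]
      norm_num
    have h2 : (∫ x in Set.Icc (0:ℝ) 1, (2 * x - 1) * H x)
        = ∫ x in (0:ℝ)..1, H x * (2 * x - 1) := by
      rw [icc_eq]
      apply intervalIntegral.integral_congr
      intro x _; ring
    have h3 : (∫ x in Set.Icc (0:ℝ) 1, x * (1 - x) * g x)
        = - ∫ x in (0:ℝ)..1, g x * (x ^ 2 - x) := by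
      rw [icc_eq, ← intervalIntegral.integral_neg]
      apply intervalIntegral.integral_congr
      intro x _
      simp only [Pi.neg_apply]
      ring
    have h4 : (∫ x in Set.Icc (0:ℝ) 1, (2 * x - 1) * H x) = 2 * XH - IH := by
      have e : (fun x : ℝ => (2 * x - 1) * H x)
          = fun x => (2 : ℝ) * (x * H x) + (-1) * H x := by
        funext x; ring
      rw [e, integral_add (Continuous.integrableOn_Icc (by fun_prop))
          (Continuous.integrableOn_Icc (by fun_prop)),
        integral_const_mul, integral_const_mul]
      rw [← hXH, ← hIH]
      ring
    rw [← h4, h2, h1, ← h3]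
  refine ⟨hvar_nn, ?_⟩
  have hfinal : 2 * (Iu2 - Iu ^ 2) ≤ 2 * XH - IH := by
    rw [← hDval]
    exact le_trans houter (le_of_eq hRHSval)
  rw [hparts] at hfinal
  simp only [hgdef] at hfinal
  linarith
end

section
/- Let f : [0,1]^d → ℝ be continuously differentiable and fix i ∈ {1,…,d}. Then ∫_{H^d} u_i(x)·(∂f/∂x_i)(x) dx = (1/2)∫_{H^d} [f(1,z) − f(0,z)]·[f(1,z) + f(0,z) − 2f(x)] dx. -/
open MeasureTheory Real

noncomputable section

lemma my_update_insertNth {n : ℕ} (i : Fin (n+1)) (t s : ℝ) (z : Fin n → ℝ) :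
    Function.update (i.insertNth t z : Fin (n+1) → ℝ) i s
      = (i.insertNth s z : Fin (n+1) → ℝ) := by
  funext j
  rcases eq_or_ne j i with rfl | h
  · simp
  · obtain ⟨k, rfl⟩ := Fin.exists_succAbove_eq h
    simp [Function.update_of_ne h, Fin.insertNth_apply_succAbove]

lemma my_hasDerivAt_update {d : ℕ} (x : Fin d → ℝ) (i : Fin d) (t : ℝ) :
    HasDerivAt (fun s : ℝ => Function.update x i s) (Pi.single i 1) t := by
  have h : (fun s : ℝ => Function.update x i s)
      = fun s : ℝ => Function.update x i 0 + s • (Pi.single i 1 : Fin d → ℝ) := by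
    funext s j
    rcases eq_or_ne j i with rfl | h
    · simp
    · simp [Function.update_of_ne h, Pi.single_eq_of_ne h]
  rw [h]
  simpa using ((hasDerivAt_id t).smul_const (Pi.single i (1:ℝ))).const_add
    (Function.update x i 0)

lemma my_hasDerivAt_comp_update {d : ℕ} {f : (Fin d → ℝ) → ℝ} (hf : ContDiff ℝ 1 f)
    (x : Fin d → ℝ) (i : Fin d) (t : ℝ) :
    HasDerivAt (fun s : ℝ => f (Function.update x i s))
      (fderiv ℝ f (Function.update x i t) (Pi.single i 1)) t :=
  ((hf.differentiable one_ne_zero) (Function.update x i t)).hasFDerivAt.comp_hasDerivAt t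
    (my_hasDerivAt_update x i t)

lemma my_pderivI_eq {d : ℕ} {f : (Fin d → ℝ) → ℝ} (hf : ContDiff ℝ 1 f)
    (i : Fin d) (x : Fin d → ℝ) :
    pderivI f i x = fderiv ℝ f x (Pi.single i 1) := by
  have h := my_hasDerivAt_comp_update hf x i (x i)
  rw [Function.update_eq_self] at h
  exact h.deriv

lemma my_cont_pderivI {d : ℕ} {f : (Fin d → ℝ) → ℝ} (hf : ContDiff ℝ 1 f) (i : Fin d) :
    Continuous (pderivI f i) := by
  have : Continuous fun x : Fin d → ℝ => fderiv ℝ f x (Pi.single i 1) :=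
    (hf.continuous_fderiv one_ne_zero).clm_apply continuous_const
  exact this.congr fun x => (my_pderivI_eq hf i x).symm

lemma my_cont_update {d : ℕ} (i : Fin d) :
    Continuous fun p : (Fin d → ℝ) × ℝ => Function.update p.1 i p.2 := by
  refine continuous_pi fun j => ?_
  rcases eq_or_ne j i with rfl | h
  · simp only [Function.update_self]; exact continuous_snd
  · simp only [Function.update_of_ne h]; exact (continuous_apply j).comp continuous_fst

lemma my_cont_uComp {d : ℕ} {f : (Fin d → ℝ) → ℝ} (hf : ContDiff ℝ 1 f) (i : Fin d) :
    Continuous (uComp f i) := by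
  have h1 : Continuous fun x : Fin d → ℝ => ∫ t in (0:ℝ)..1, f (Function.update x i t) := by
    apply intervalIntegral.continuous_parametric_intervalIntegral_of_continuous'
      (f := fun x t => f (Function.update x i t))
    exact hf.continuous.comp (my_cont_update i)
  exact hf.continuous.sub h1

lemma my_cont_insertNth {n : ℕ} (i : Fin (n+1)) :
    Continuous fun p : ℝ × (Fin n → ℝ) => (i.insertNth p.1 p.2 : Fin (n+1) → ℝ) := by
  refine continuous_pi fun j => ?_
  rcases eq_or_ne j i with rfl | h
  · simp only [Fin.insertNth_apply_same]; exact continuous_fst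
  · obtain ⟨k, rfl⟩ := Fin.exists_succAbove_eq h
    simp only [Fin.insertNth_apply_succAbove]
    exact (continuous_apply k).comp continuous_snd

lemma my_cube_split {n : ℕ} (i : Fin (n+1)) (F : (Fin (n+1) → ℝ) → ℝ) (hF : Continuous F) :
    ∫ x in unitCube (n+1), F x
      = ∫ z in Set.Icc (0 : Fin n → ℝ) 1, ∫ t in Set.Icc (0:ℝ) 1, F (i.insertNth t z) := by
  have happ : ∀ p : ℝ × (Fin n → ℝ),
      (MeasurableEquiv.piFinSuccAbove (fun _ : Fin (n+1) => ℝ) i).symm p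
        = i.insertNth p.1 p.2 := by
    intro p
    funext j
    rw [MeasurableEquiv.piFinSuccAbove_symm_apply]
    exact Fin.insertNthEquiv_apply _ _ _ _
  have hpre : (⇑(MeasurableEquiv.piFinSuccAbove (fun _ : Fin (n+1) => ℝ) i).symm) ⁻¹'
      unitCube (n+1) = Set.Icc (0:ℝ) 1 ×ˢ Set.Icc (0 : Fin n → ℝ) 1 := by
    ext ⟨t, z⟩
    simp only [Set.mem_preimage, happ, unitCube, Set.mem_prod, Fin.insertNth_mem_Icc,
      Pi.zero_apply, Pi.one_apply]
    exact Iff.rfl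
  have hG : Continuous fun p : ℝ × (Fin n → ℝ) => F (i.insertNth p.1 p.2) :=
    hF.comp (my_cont_insertNth i)
  have hint : IntegrableOn (fun p : ℝ × (Fin n → ℝ) => F (i.insertNth p.1 p.2))
      (Set.Icc (0:ℝ) 1 ×ˢ Set.Icc (0 : Fin n → ℝ) 1) volume :=
    hG.continuousOn.integrableOn_compact (isCompact_Icc.prod isCompact_Icc)
  rw [← ((volume_preserving_piFinSuccAbove (fun _ : Fin (n+1) => ℝ) i).symm).setIntegral_preimage_emb
    (MeasurableEquiv.measurableEmbedding _) F (unitCube (n+1))]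
  rw [hpre]
  simp only [happ]
  rw [Measure.volume_eq_prod, ← Measure.prod_restrict]
  rw [MeasureTheory.integral_prod_symm _ (by
    rw [Measure.prod_restrict]
    rw [Measure.volume_eq_prod] at hint
    exact hint)]

lemma my_inner_key (φ D : ℝ → ℝ) (hd : ∀ t, HasDerivAt φ (D t) t)
    (hφ : Continuous φ) (hD : Continuous D) (c : ℝ) :
    ∫ t in Set.Icc (0:ℝ) 1, (φ t - c) * D t =
      (1/2) * ((φ 1 - φ 0) * (φ 1 + φ 0 - 2 * c)) := by
  rw [MeasureTheory.integral_Icc_eq_integral_Ioc, ← intervalIntegral.integral_of_le zero_le_one]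
  have key : ∀ t ∈ Set.uIcc (0:ℝ) 1,
      HasDerivAt (fun s => (φ s - c)^2/2) ((φ t - c) * D t) t := by
    intro t _
    have h := (((hd t).sub_const c).pow 2).div_const 2
    exact h.congr_deriv (by norm_num <;> ring)
  rw [intervalIntegral.integral_eq_sub_of_hasDerivAt key
    (((hφ.sub continuous_const).mul hD).intervalIntegrable _ _)]
  ring

lemma my_inner_rhs (φ : ℝ → ℝ) (hφ : Continuous φ) (A B : ℝ) :
    ∫ t in Set.Icc (0:ℝ) 1, A * (B - 2 * φ t)
      = A * B - 2 * A * ∫ t in (0:ℝ)..1, φ t := by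
  rw [MeasureTheory.integral_Icc_eq_integral_Ioc, ← intervalIntegral.integral_of_le zero_le_one]
  have h1 : IntervalIntegrable (fun t => A * B) volume 0 1 :=
    intervalIntegrable_const
  have h2 : IntervalIntegrable (fun t => (2 * A) * φ t) volume 0 1 :=
    (continuous_const.mul hφ).intervalIntegrable _ _
  have : ∀ t : ℝ, A * (B - 2 * φ t) = A * B - (2 * A) * φ t := fun t => by ring
  simp only [this]
  rw [intervalIntegral.integral_sub h1 h2, intervalIntegral.integral_const,
    intervalIntegral.integral_const_mul]
  simp

/-- **Integral identity (14).** For `f` continuously differentiable on the unit cube,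
`∫ u_i(x)·(∂f/∂x_i)(x) dx = (1/2) ∫ [f(1,z) − f(0,z)]·[f(1,z) + f(0,z) − 2f(x)] dx`. -/
theorem integral_u_mul_pderiv (d : ℕ) (f : (Fin d → ℝ) → ℝ) (hf : ContDiff ℝ 1 f)
    (i : Fin d) :
    ∫ x in unitCube d, uComp f i x * pderivI f i x =
      (1 / 2) * ∫ x in unitCube d,
        (f (Function.update x i 1) - f (Function.update x i 0)) *
          (f (Function.update x i 1) + f (Function.update x i 0) - 2 * f x) := by
  have hpos : 0 < d := i.pos
  obtain ⟨n, rfl⟩ : ∃ n, d = n + 1 := ⟨d - 1, by omega⟩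
  have hcont1 : Continuous fun x => uComp f i x * pderivI f i x :=
    (my_cont_uComp hf i).mul (my_cont_pderivI hf i)
  have hcu1 : Continuous fun x : Fin (n+1) → ℝ => Function.update x i 1 :=
    (my_cont_update i).comp (continuous_id.prodMk continuous_const)
  have hcu0 : Continuous fun x : Fin (n+1) → ℝ => Function.update x i 0 :=
    (my_cont_update i).comp (continuous_id.prodMk continuous_const)
  have hcont2 : Continuous fun x : Fin (n+1) → ℝ =>
      (f (Function.update x i 1) - f (Function.update x i 0)) *
        (f (Function.update x i 1) + f (Function.update x i 0) - 2 * f x) :=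
    ((hf.continuous.comp hcu1).sub (hf.continuous.comp hcu0)).mul
      (((hf.continuous.comp hcu1).add (hf.continuous.comp hcu0)).sub
        (continuous_const.mul hf.continuous))
  rw [my_cube_split i _ hcont1, my_cube_split i _ hcont2]
  have hder : ∀ (z : Fin n → ℝ) (t : ℝ),
      HasDerivAt (fun s => f (i.insertNth s z))
        (fderiv ℝ f (i.insertNth t z) (Pi.single i 1)) t := by
    intro z t
    have h := my_hasDerivAt_comp_update hf (i.insertNth t z) i t
    simp only [my_update_insertNth] at h
    exact h
  have hins : ∀ z : Fin n → ℝ, Continuous fun t : ℝ => (i.insertNth t z : Fin (n+1) → ℝ) :=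
    fun z => (my_cont_insertNth i).comp (continuous_id.prodMk continuous_const)
  have hφc : ∀ z : Fin n → ℝ, Continuous fun t : ℝ => f (i.insertNth t z) :=
    fun z => hf.continuous.comp (hins z)
  have hDc : ∀ z : Fin n → ℝ,
      Continuous fun t : ℝ => fderiv ℝ f (i.insertNth t z) (Pi.single i 1) :=
    fun z => ((hf.continuous_fderiv one_ne_zero).clm_apply continuous_const).comp (hins z)
  have hL : ∀ z : Fin n → ℝ,
      ∫ t in Set.Icc (0:ℝ) 1, uComp f i (i.insertNth t z) * pderivI f i (i.insertNth t z)
        = (1/2) * ((f (i.insertNth 1 z) - f (i.insertNth 0 z)) *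
            (f (i.insertNth 1 z) + f (i.insertNth 0 z)
              - 2 * ∫ s in (0:ℝ)..1, f (i.insertNth s z))) := by
    intro z
    have heq : ∀ t : ℝ, uComp f i (i.insertNth t z) * pderivI f i (i.insertNth t z)
        = (f (i.insertNth t z) - ∫ s in (0:ℝ)..1, f (i.insertNth s z)) *
            fderiv ℝ f (i.insertNth t z) (Pi.single i 1) := by
      intro t
      rw [my_pderivI_eq hf]
      congr 1
      simp only [uComp, my_update_insertNth]
    simp only [heq]
    exact my_inner_key _ _ (hder z) (hφc z) (hDc z) _
  have hR : ∀ z : Fin n → ℝ,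
      (∫ t in Set.Icc (0:ℝ) 1,
        (f (Function.update (i.insertNth t z : Fin (n+1) → ℝ) i 1)
            - f (Function.update (i.insertNth t z : Fin (n+1) → ℝ) i 0)) *
          (f (Function.update (i.insertNth t z : Fin (n+1) → ℝ) i 1)
            + f (Function.update (i.insertNth t z : Fin (n+1) → ℝ) i 0)
            - 2 * f (i.insertNth t z)))
        = (f (i.insertNth 1 z) - f (i.insertNth 0 z)) *
            (f (i.insertNth 1 z) + f (i.insertNth 0 z))
          - 2 * (f (i.insertNth 1 z) - f (i.insertNth 0 z))
            * ∫ s in (0:ℝ)..1, f (i.insertNth s z) := by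
    intro z
    simp only [my_update_insertNth]
    exact my_inner_rhs _ (hφc z) _ _
  simp only [hL, hR]
  rw [← MeasureTheory.integral_const_mul]
  congr 1
  funext z
  ring
end
end

section
/- Let f : [0,1]^d → ℝ be continuously differentiable, fix i ∈ {1,…,d} and m > 0. Then ∫_{H^d} x_i^m u_i(x) dx = (1/(m+1)) · [ ∫_{H^d} (f(1,z) − f(x)) dx − ∫_{H^d} x_i^{m+1} (∂f/∂x_i)(x) dx ]. -/
open MeasureTheory Real

noncomputable section

/-- 1D slice identity. -/
lemma slice_id (g : ℝ → ℝ) (hg : ContDiff ℝ 1 g) (m : ℝ) (hm : 0 < m) :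
    ∫ t in (0:ℝ)..1, t ^ m * (g t - ∫ s in (0:ℝ)..1, g s) =
      (1 / (m + 1)) * ∫ t in (0:ℝ)..1, ((g 1 - g t) - t ^ (m + 1) * deriv g t) := by
  have hcg : Continuous g := hg.continuous
  have hcg' : Continuous (deriv g) := hg.continuous_deriv le_rfl
  have hrm : Continuous fun t : ℝ => t ^ m := Real.continuous_rpow_const hm.le
  have hrm1 : Continuous fun t : ℝ => t ^ (m + 1) := Real.continuous_rpow_const (by linarith)
  have hm1 : m + 1 ≠ 0 := by positivity
  -- integration by parts
  have parts : ∫ t in (0:ℝ)..1, t ^ (m + 1) * deriv g t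
      = g 1 - (m + 1) * ∫ t in (0:ℝ)..1, t ^ m * g t := by
    have h := intervalIntegral.integral_mul_deriv_eq_deriv_mul
      (u := fun t : ℝ => t ^ (m + 1)) (u' := fun t : ℝ => (m + 1) * t ^ m)
      (v := g) (v' := deriv g) (a := 0) (b := 1)
      (fun x _ => by
        simpa [add_sub_cancel_right] using
          (Real.hasDerivAt_rpow_const (x := x) (p := m + 1) (Or.inr (by linarith))))
      (fun x _ => (hg.differentiable one_ne_zero x).hasDerivAt)
      ((continuous_const.mul hrm).intervalIntegrable _ _)
      (hcg'.intervalIntegrable _ _)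
    rw [h]
    rw [show ((1:ℝ) ^ (m+1)) = 1 from Real.one_rpow _, show ((0:ℝ) ^ (m+1)) = 0 from Real.zero_rpow hm1]
    have : ∫ x in (0:ℝ)..1, (m + 1) * x ^ m * g x
        = (m + 1) * ∫ x in (0:ℝ)..1, x ^ m * g x := by
      rw [← intervalIntegral.integral_const_mul]
      simp [mul_assoc]
    rw [this]; ring
  have hIm : ∫ t in (0:ℝ)..1, t ^ m = 1 / (m + 1) := by
    rw [integral_rpow (Or.inl (by linarith))]
    simp [Real.one_rpow, Real.zero_rpow hm1]
  set C := ∫ s in (0:ℝ)..1, g s with hC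
  have hLHS : ∫ t in (0:ℝ)..1, t ^ m * (g t - C)
      = (∫ t in (0:ℝ)..1, t ^ m * g t) - C * (1 / (m + 1)) := by
    have h1 : ∀ t : ℝ, t ^ m * (g t - C) = t ^ m * g t - C * t ^ m := fun t => by ring
    simp_rw [h1]
    rw [intervalIntegral.integral_sub (f := fun t => t ^ m * g t) (g := fun t => C * t ^ m) ((hrm.mul hcg).intervalIntegrable _ _)
      ((continuous_const.mul hrm).intervalIntegrable _ _),
      intervalIntegral.integral_const_mul, hIm]
  have hRHS : ∫ t in (0:ℝ)..1, ((g 1 - g t) - t ^ (m + 1) * deriv g t)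
      = (m + 1) * (∫ t in (0:ℝ)..1, t ^ m * g t) - C := by
    rw [intervalIntegral.integral_sub (f := fun t => g 1 - g t) (g := fun t => t ^ (m + 1) * deriv g t)
      (((continuous_const.sub hcg)).intervalIntegrable _ _)
      ((hrm1.mul hcg').intervalIntegrable _ _),
      intervalIntegral.integral_sub ((continuous_const : Continuous fun _ : ℝ => g 1).intervalIntegrable _ _) (hcg.intervalIntegrable _ _),
      parts]
    simp only [intervalIntegral.integral_const, smul_eq_mul, sub_zero, mul_one]
    ring
  rw [hLHS, hRHS]
  field_simp

lemma cube_fubini {n : ℕ} (i : Fin (n + 1)) (Φ : (Fin (n + 1) → ℝ) → ℝ) (hΦ : Continuous Φ) :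
    ∫ x in Set.Icc (0 : Fin (n + 1) → ℝ) 1, Φ x =
      ∫ y in Set.Icc (0 : Fin n → ℝ) 1, ∫ t in (0:ℝ)..1, Φ ((i.insertNth t y : Fin (n+1) → ℝ)) := by
  set e := MeasurableEquiv.piFinSuccAbove (fun _ : Fin (n + 1) => ℝ) i with he
  have hmp : MeasurePreserving e volume (volume.prod volume) :=
    volume_preserving_piFinSuccAbove (fun _ : Fin (n + 1) => ℝ) i
  set G : ℝ × (Fin n → ℝ) → ℝ := fun z => Φ (i.insertNth z.1 z.2) with hGdef
  have hins : Continuous fun z : ℝ × (Fin n → ℝ) => (i.insertNth z.1 z.2 : Fin (n+1) → ℝ) := by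
    apply continuous_pi; intro j
    rcases eq_or_ne j i with rfl | hne
    · simpa using (continuous_fst : Continuous fun z : ℝ × (Fin n → ℝ) => z.1)
    · obtain ⟨k, rfl⟩ := Fin.exists_succAbove_eq hne
      simpa [Fin.insertNth_apply_succAbove, Function.comp_def] using
        ((continuous_apply k).comp (continuous_snd : Continuous fun z : ℝ × (Fin n → ℝ) => z.2))
  have hG : Continuous G := hΦ.comp hins
  have hkey : ∀ x, G (e x) = Φ x := by
    intro x
    have : i.insertNth (e x).1 (e x).2 = x := by
      simp [he, MeasurableEquiv.piFinSuccAbove, Fin.insertNthEquiv]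
    simp [hGdef, this]
  have hpre : e ⁻¹' (Set.Icc (0:ℝ) 1 ×ˢ Set.Icc (0 : Fin n → ℝ) 1)
      = Set.Icc (0 : Fin (n + 1) → ℝ) 1 := by
    ext x
    simp only [Set.mem_preimage, Set.mem_prod, Set.mem_Icc, Pi.le_def,
      he, MeasurableEquiv.piFinSuccAbove, Fin.insertNthEquiv, MeasurableEquiv.coe_mk,
      Equiv.symm_symm, Equiv.coe_fn_mk, Pi.zero_apply, Pi.one_apply]
    constructor
    · rintro ⟨⟨h1, h2⟩, h3, h4⟩
      constructor <;> intro j <;> rcases eq_or_ne j i with rfl | hne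
      · exact h1
      · obtain ⟨k, rfl⟩ := Fin.exists_succAbove_eq hne; exact h3 k
      · exact h2
      · obtain ⟨k, rfl⟩ := Fin.exists_succAbove_eq hne; exact h4 k
    · rintro ⟨h1, h2⟩
      exact ⟨⟨h1 i, h2 i⟩, fun k => h1 _, fun k => h2 _⟩
  have hint : Integrable G
      ((volume.restrict (Set.Icc (0:ℝ) 1)).prod (volume.restrict (Set.Icc (0 : Fin n → ℝ) 1))) := by
    rw [Measure.prod_restrict]
    exact hG.continuousOn.integrableOn_compact (isCompact_Icc.prod isCompact_Icc)
  calc ∫ x in Set.Icc (0 : Fin (n + 1) → ℝ) 1, Φ x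
      = ∫ x in e ⁻¹' (Set.Icc (0:ℝ) 1 ×ˢ Set.Icc (0 : Fin n → ℝ) 1), G (e x) := by
        rw [hpre]; exact setIntegral_congr_fun measurableSet_Icc fun x _ => (hkey x).symm
    _ = ∫ z in Set.Icc (0:ℝ) 1 ×ˢ Set.Icc (0 : Fin n → ℝ) 1, G z ∂(volume.prod volume) :=
        hmp.setIntegral_preimage_emb e.measurableEmbedding G _
    _ = ∫ z, G z ∂((volume.restrict (Set.Icc (0:ℝ) 1)).prod
          (volume.restrict (Set.Icc (0 : Fin n → ℝ) 1))) := by rw [Measure.prod_restrict]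
    _ = ∫ y in Set.Icc (0 : Fin n → ℝ) 1, ∫ t in Set.Icc (0:ℝ) 1, G (t, y) :=
        integral_prod_symm G hint
    _ = ∫ y in Set.Icc (0 : Fin n → ℝ) 1, ∫ t in (0:ℝ)..1, Φ ((i.insertNth t y : Fin (n+1) → ℝ)) := by
        congr 1; funext y
        rw [intervalIntegral.integral_of_le zero_le_one, ← integral_Icc_eq_integral_Ioc]

/-- **Integral identity (18).** For `f` continuously differentiable on the unit cube and
`m > 0`, `∫ x_i^m u_i(x) dx = (1/(m+1))·[∫ (f(1,z) − f(x)) dx − ∫ x_i^{m+1} (∂f/∂x_i) dx]`. -/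
theorem integral_pow_mul_u (d : ℕ) (f : (Fin d → ℝ) → ℝ) (hf : ContDiff ℝ 1 f)
    (i : Fin d) (m : ℝ) (hm : 0 < m) :
    ∫ x in unitCube d, (x i) ^ m * uComp f i x =
      (1 / (m + 1)) *
        ((∫ x in unitCube d, (f (Function.update x i 1) - f x)) -
          ∫ x in unitCube d, (x i) ^ (m + 1) * pderivI f i x) := by
  cases d with
  | zero => exact i.elim0
  | succ n =>
  have hm1 : (0:ℝ) < m + 1 := by linarith
  -- continuity facts
  have hpd_eq : pderivI f i = fun x => fderiv ℝ f x (Pi.single i 1) := by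
    funext x
    have hx : Function.update x i (x i) = x := Function.update_eq_self i x
    have hF : HasFDerivAt f (fderiv ℝ f x) (Function.update x i (x i)) := by
      rw [hx]; exact (hf.differentiable one_ne_zero x).hasFDerivAt
    have h := hF.comp_hasDerivAt (x i) (hasDerivAt_update x i (x i))
    exact h.deriv
  have hcont_pd : Continuous (pderivI f i) := by
    rw [hpd_eq]
    exact (ContinuousLinearMap.apply ℝ ℝ (Pi.single i (1:ℝ))).continuous.comp
      (hf.continuous_fderiv one_ne_zero)
  have hcont_u : Continuous (uComp f i) := by
    refine hf.continuous.sub ?_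
    exact intervalIntegral.continuous_parametric_intervalIntegral_of_continuous'
      (f := fun (x : Fin (n+1) → ℝ) (t : ℝ) => f (Function.update x i t))
      (hf.continuous.comp (continuous_fst.update i continuous_snd)) 0 1
  have hΦ1 : Continuous fun x : Fin (n+1) → ℝ => (x i) ^ m * uComp f i x :=
    ((Real.continuous_rpow_const hm.le).comp (continuous_apply i)).mul hcont_u
  have hΦ2 : Continuous fun x : Fin (n+1) → ℝ =>
      (f (Function.update x i 1) - f x) - (x i) ^ (m + 1) * pderivI f i x :=
    ((hf.continuous.comp (continuous_id.update i continuous_const)).sub hf.continuous).sub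
      (((Real.continuous_rpow_const hm1.le).comp (continuous_apply i)).mul hcont_pd)
  -- combine the two integrals on the RHS into one
  have hcomb : (∫ x in unitCube (n+1), (f (Function.update x i 1) - f x)) -
      ∫ x in unitCube (n+1), (x i) ^ (m + 1) * pderivI f i x =
      ∫ x in unitCube (n+1),
        ((f (Function.update x i 1) - f x) - (x i) ^ (m + 1) * pderivI f i x) := by
    refine (integral_sub ?_ ?_).symm
    · exact ((hf.continuous.comp (continuous_id.update i continuous_const)).sub
        hf.continuous).continuousOn.integrableOn_compact isCompact_Icc
    · exact (((Real.continuous_rpow_const hm1.le).comp (continuous_apply i)).mul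
        hcont_pd).continuousOn.integrableOn_compact isCompact_Icc
  rw [hcomb]
  show (∫ x in Set.Icc (0 : Fin (n+1) → ℝ) 1, (x i) ^ m * uComp f i x) =
    (1 / (m + 1)) * ∫ x in Set.Icc (0 : Fin (n+1) → ℝ) 1,
      ((f (Function.update x i 1) - f x) - (x i) ^ (m + 1) * pderivI f i x)
  rw [cube_fubini i _ hΦ1, cube_fubini i _ hΦ2, ← MeasureTheory.integral_const_mul]
  refine integral_congr_ae (Filter.Eventually.of_forall fun y => ?_)
  -- the slice identity
  have hg : ContDiff ℝ 1 (fun t : ℝ => f (i.insertNth t y)) := by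
    have h1 : (fun t : ℝ => (i.insertNth t y : Fin (n+1) → ℝ))
        = fun t : ℝ => (i.insertNth 0 y : Fin (n+1) → ℝ) + t • (Pi.single i 1 : Fin (n+1) → ℝ) := by
      funext t; ext j
      rcases eq_or_ne j i with rfl | hne
      · simp
      · obtain ⟨k, rfl⟩ := Fin.exists_succAbove_eq hne
        simp [Pi.single_eq_of_ne (Fin.succAbove_ne i k)]
    exact hf.comp (by rw [h1]; exact contDiff_const.add (contDiff_id.smul contDiff_const))
  have hs := slice_id (fun t : ℝ => f (i.insertNth t y)) hg m hm
  simp only [uComp, pderivI, Fin.update_insertNth, Fin.insertNth_apply_same] at *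
  exact hs
end
end

section
/- Fix i and suppose the i-th input is Gaussian with variance σ_i² > 0. Assume f ∈ L²(μ), ∂f/∂x_i ∈ L²(μ), and D > 0. Then σ_i² w_i² / D ≤ S_i^tot, where w_i = ∫_{ℝ^d} (∂f/∂x_i) dμ. -/
open MeasureTheory ProbabilityTheory
open scoped NNReal


section AuxHelpers
open Real Filter
open scoped ENNReal

namespace DGSMAux

variable {α : Type*} [MeasurableSpace α] {μ : Measure α}



/-- Cauchy–Schwarz for integrals. -/
lemma sq_integral_mul_le {g h : α → ℝ} (hg : MemLp g 2 μ) (hh : MemLp h 2 μ) :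
    (∫ a, g a * h a ∂μ) ^ 2 ≤ (∫ a, g a ^ 2 ∂μ) * (∫ a, h a ^ 2 ∂μ) := by
  have hpq : (2:ℝ).HolderConjugate 2 := Real.HolderConjugate.two_two
  have h2 : (ENNReal.ofReal (2:ℝ)) = 2 := by norm_num
  have H := integral_mul_norm_le_Lp_mul_Lq (μ := μ) (f := g) (g := h) hpq
    (by rwa [h2]) (by rwa [h2])
  have habs : |∫ a, g a * h a ∂μ| ≤ ∫ a, ‖g a‖ * ‖h a‖ ∂μ := by
    have := norm_integral_le_integral_norm (μ := μ) (fun a => g a * h a)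
    simpa [abs_mul] using this
  have hA : ∫ a, ‖g a‖ ^ (2:ℝ) ∂μ = ∫ a, g a ^ 2 ∂μ := by
    refine integral_congr_ae (Eventually.of_forall fun a => ?_)
    simp [Real.rpow_two, sq_abs]
  have hB : ∫ a, ‖h a‖ ^ (2:ℝ) ∂μ = ∫ a, h a ^ 2 ∂μ := by
    refine integral_congr_ae (Eventually.of_forall fun a => ?_)
    simp [Real.rpow_two, sq_abs]
  rw [hA, hB] at H
  have hAnn : 0 ≤ ∫ a, g a ^ 2 ∂μ := integral_nonneg fun a => sq_nonneg _
  have hBnn : 0 ≤ ∫ a, h a ^ 2 ∂μ := integral_nonneg fun a => sq_nonneg _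
  have hle := habs.trans H
  calc (∫ a, g a * h a ∂μ) ^ 2 = |∫ a, g a * h a ∂μ| ^ 2 := (sq_abs _).symm
    _ ≤ ((∫ a, g a ^ 2 ∂μ) ^ (1/(2:ℝ)) * (∫ a, h a ^ 2 ∂μ) ^ (1/(2:ℝ))) ^ 2 :=
        pow_le_pow_left₀ (abs_nonneg _) hle 2
    _ = (∫ a, g a ^ 2 ∂μ) * (∫ a, h a ^ 2 ∂μ) := by
        rw [mul_pow, ← Real.rpow_natCast ((∫ a, g a ^ 2 ∂μ) ^ (1/(2:ℝ))) 2,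
          ← Real.rpow_natCast ((∫ a, h a ^ 2 ∂μ) ^ (1/(2:ℝ))) 2,
          ← Real.rpow_mul hAnn, ← Real.rpow_mul hBnn]
        norm_num

/-- Product of two L² functions is integrable. -/
lemma L2.integrable_mul' {g h : α → ℝ} (hg : MemLp g 2 μ) (hh : MemLp h 2 μ) :
    Integrable (fun a => g a * h a) μ := by
  have h1 : Integrable (fun a => g a ^ 2) μ := hg.integrable_sq
  have h2 : Integrable (fun a => h a ^ 2) μ := hh.integrable_sq
  refine Integrable.mono' (((h1.add h2).div_const 2)) (hg.1.mul hh.1)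
    (Eventually.of_forall fun a => ?_)
  simp only [Real.norm_eq_abs, abs_mul, Pi.add_apply]
  nlinarith [sq_nonneg (|g a| - |h a|), sq_abs (g a), sq_abs (h a)]


section Gauss1D
variable (m : ℝ) (v : ℝ≥0)

lemma gaussian_integral_conv (g : ℝ → ℝ) (hv : v ≠ 0) :
    ∫ t, g t ∂(gaussianReal m v) = ∫ t, gaussianPDFReal m v t * g t := by
  rw [gaussianReal_of_var_ne_zero m hv]
  have hm : Measurable fun x => (gaussianPDFReal m v x).toNNReal :=
    (measurable_gaussianPDFReal m v).real_toNNReal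
  have hpdf : gaussianPDF m v = fun x => ((gaussianPDFReal m v x).toNNReal : ℝ≥0∞) := rfl
  rw [hpdf, integral_withDensity_eq_integral_smul hm]
  refine integral_congr_ae (Filter.Eventually.of_forall fun t => ?_)
  simp [NNReal.smul_def, Real.coe_toNNReal _ (gaussianPDFReal_nonneg m v t)]

lemma gaussian_integrable_conv {g : ℝ → ℝ} (hv : v ≠ 0) :
    Integrable g (gaussianReal m v) ↔
      Integrable (fun t => gaussianPDFReal m v t * g t) volume := by
  rw [gaussianReal_of_var_ne_zero m hv]
  have hm : Measurable fun x => (gaussianPDFReal m v x).toNNReal :=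
    (measurable_gaussianPDFReal m v).real_toNNReal
  have hpdf : gaussianPDF m v = fun x => ((gaussianPDFReal m v x).toNNReal : ℝ≥0∞) := rfl
  rw [hpdf, integrable_withDensity_iff_integrable_smul hm]
  apply integrable_congr
  refine Filter.Eventually.of_forall fun t => ?_
  simp [NNReal.smul_def, Real.coe_toNNReal _ (gaussianPDFReal_nonneg m v t)]

lemma hasDerivAt_gaussianPDFReal (t : ℝ) :
    HasDerivAt (gaussianPDFReal m v) (-((t - m) / v) * gaussianPDFReal m v t) t := by
  unfold gaussianPDFReal
  have h1 : HasDerivAt (fun x : ℝ => x - m) 1 t := (hasDerivAt_id t).sub_const m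
  have h2 : HasDerivAt (fun x : ℝ => (x - m) ^ 2) (2 * (t - m)) t := by
    simpa using h1.fun_pow 2
  have h3 : HasDerivAt (fun x : ℝ => -(x - m) ^ 2 / (2 * (v:ℝ)))
      (-(2 * (t - m)) / (2 * (v:ℝ))) t := h2.neg.div_const _
  have h4 := (h3.exp).const_mul ((Real.sqrt (2 * Real.pi * v))⁻¹)
  refine h4.congr_deriv ?_
  ring
end Gauss1D

section Stein
variable {m : ℝ} {v : ℝ≥0}

/-- Stein's identity for the Gaussian measure. -/
lemma stein_identity (hv : v ≠ 0) {g g' : ℝ → ℝ}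
    (hd : ∀ t, HasDerivAt g (g' t) t)
    (hgi : Integrable g (gaussianReal m v))
    (hg'i : Integrable g' (gaussianReal m v))
    (hmul : Integrable (fun t => (t - m) * g t) (gaussianReal m v)) :
    (v : ℝ) * ∫ t, g' t ∂(gaussianReal m v)
      = ∫ t, (t - m) * g t ∂(gaussianReal m v) := by
  have hvpos : (0:ℝ) < v := by positivity
  set φ := gaussianPDFReal m v with hφ
  -- the two pieces of the derivative of `g * φ`
  have hI1 : Integrable (fun t => φ t * g' t) volume :=
    (gaussian_integrable_conv m v hv).mp hg'i
  have hI2' : Integrable (fun t => φ t * ((t - m) * g t)) volume :=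
    (gaussian_integrable_conv m v hv).mp hmul
  have hI2 : Integrable (fun t => -((t - m) / v) * φ t * g t) volume := by
    refine (hI2'.const_mul (-(1:ℝ)/v)).congr (Filter.Eventually.of_forall fun t => ?_)
    field_simp
  have hG : Integrable (fun t => g t * φ t) volume := by
    refine ((gaussian_integrable_conv m v hv).mp hgi).congr
      (Filter.Eventually.of_forall fun t => mul_comm _ _)
  have hderiv : ∀ t, HasDerivAt (fun t => g t * φ t)
      (g' t * φ t + g t * (-((t - m) / v) * φ t)) t :=
    fun t => (hd t).mul (hasDerivAt_gaussianPDFReal m v t)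
  have hG' : Integrable (fun t => g' t * φ t + g t * (-((t - m) / v) * φ t)) volume := by
    refine Integrable.add ?_ ?_
    · exact hI1.congr (Filter.Eventually.of_forall fun t => mul_comm _ _)
    · exact hI2.congr (Filter.Eventually.of_forall fun t => by ring)
  have hzero : ∫ t, (g' t * φ t + g t * (-((t - m) / v) * φ t)) = 0 :=
    integral_eq_zero_of_hasDerivAt_of_integrable hderiv hG' hG
  have hsplit : ∫ t, (g' t * φ t + g t * (-((t - m) / v) * φ t))
      = (∫ t, φ t * g' t) + ∫ t, (-(1:ℝ)/v) * (φ t * ((t - m) * g t)) := by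
    rw [integral_add (hI1.congr (Filter.Eventually.of_forall fun t => mul_comm _ _))
      (hI2.congr (Filter.Eventually.of_forall fun t => by ring))]
    congr 1
    · exact integral_congr_ae (Filter.Eventually.of_forall fun t => mul_comm _ _)
    · refine integral_congr_ae (Filter.Eventually.of_forall fun t => ?_)
      field_simp
  rw [hsplit, integral_const_mul] at hzero
  rw [gaussian_integral_conv m v _ hv, gaussian_integral_conv m v _ hv]
  have := hzero
  field_simp at this ⊢
  linarith

/-- Second-moment-type integrability for the Gaussian. -/
lemma memℒp_two_sub_const_gaussian (hv : v ≠ 0) :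
    MemLp (fun t : ℝ => t - m) 2 (gaussianReal m v) := by
  have hvpos : (0:ℝ) < v := by positivity
  have hmeas : AEStronglyMeasurable (fun t : ℝ => t - m) (gaussianReal m v) :=
    (measurable_id.sub_const m).aestronglyMeasurable
  rw [memLp_two_iff_integrable_sq hmeas, gaussian_integrable_conv m v hv]
  set b : ℝ := 1 / (2 * v) with hb
  have hbpos : 0 < b := by positivity
  set c : ℝ := (Real.sqrt (2 * Real.pi * v))⁻¹ with hc
  have hcpos : 0 < c := by
    rw [hc]
    have : 0 < Real.sqrt (2 * Real.pi * v) := Real.sqrt_pos.mpr (by positivity)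
    positivity
  -- dominating function
  have hdom : Integrable (fun t : ℝ => c * (2 / b) * Real.exp (-(b/2) * (t - m)^2)) volume := by
    have h0 : Integrable (fun x : ℝ => Real.exp (-(b/2) * x^2)) volume :=
      integrable_exp_neg_mul_sq (by positivity)
    exact (h0.comp_sub_right m).const_mul _
  refine hdom.mono' ?_ (Filter.Eventually.of_forall fun t => ?_)
  · exact ((measurable_gaussianPDFReal m v).mul
      ((measurable_id.sub_const m).pow_const 2)).aestronglyMeasurable
  · have harg : -(t - m)^2/(2*(v:ℝ)) = -b * (t-m)^2 := by rw [hb]; ring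
    have hφ : gaussianPDFReal m v t = c * Real.exp (-b * (t - m)^2) := by
      rw [hc]
      unfold gaussianPDFReal
      rw [← harg]
    rw [Real.norm_eq_abs, hφ]
    have hnn : 0 ≤ c * Real.exp (-b * (t - m)^2) * (t - m)^2 := by positivity
    rw [abs_of_nonneg hnn]
    -- key bound : x² e^{-bx²} ≤ (2/b) e^{-(b/2)x²}
    set s : ℝ := (b/2) * (t - m)^2 with hs
    have hsnn : 0 ≤ s := by positivity
    have hse : s ≤ Real.exp s := (Real.add_one_le_exp s).trans' (by linarith)
    have hE : Real.exp (-b * (t - m)^2) = Real.exp (-s) * Real.exp (-s) := by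
      rw [← Real.exp_add]
      congr 1
      rw [hs]; ring
    have hx2 : (t - m)^2 = (2 / b) * s := by
      rw [hs]; field_simp
    have hkey : (t - m)^2 * Real.exp (-s) ≤ 2 / b := by
      rw [hx2]
      have h1 : s * Real.exp (-s) ≤ 1 := by
        have := mul_le_mul_of_nonneg_right hse (Real.exp_nonneg (-s))
        rwa [← Real.exp_add, add_neg_cancel, Real.exp_zero] at this
      calc 2 / b * s * Real.exp (-s) = 2 / b * (s * Real.exp (-s)) := by ring
        _ ≤ 2 / b * 1 := by
            apply mul_le_mul_of_nonneg_left h1 (by positivity)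
        _ = 2 / b := mul_one _
    have hexp : Real.exp (-(b/2) * (t-m)^2) = Real.exp (-s) := by
      congr 1; rw [hs]; ring
    rw [hexp, hE]
    calc c * (Real.exp (-s) * Real.exp (-s)) * (t - m)^2
        = c * Real.exp (-s) * ((t - m)^2 * Real.exp (-s)) := by ring
      _ ≤ c * Real.exp (-s) * (2 / b) := by
          apply mul_le_mul_of_nonneg_left hkey (by positivity)
      _ = c * (2 / b) * Real.exp (-s) := by ring

lemma integral_sub_const_gaussian (hv : v ≠ 0) :
    ∫ t, (t - m) ∂(gaussianReal m v) = 0 := by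
  have hint : Integrable (fun t : ℝ => t - m) (gaussianReal m v) :=
    (memℒp_two_sub_const_gaussian hv).integrable one_le_two
  have := stein_identity hv (g := fun _ => (1:ℝ)) (g' := fun _ => (0:ℝ))
    (fun t => hasDerivAt_const t 1) (integrable_const 1) (integrable_const 0)
    (hint.congr (Filter.Eventually.of_forall fun t => by ring))
  simp only [integral_zero, mul_zero, mul_one] at this
  exact this.symm

lemma integral_sq_sub_const_gaussian (hv : v ≠ 0) :
    ∫ t, (t - m)^2 ∂(gaussianReal m v) = (v : ℝ) := by
  have hint : Integrable (fun t : ℝ => t - m) (gaussianReal m v) :=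
    (memℒp_two_sub_const_gaussian hv).integrable one_le_two
  have hsq : Integrable (fun t : ℝ => (t - m)^2) (gaussianReal m v) :=
    (memℒp_two_sub_const_gaussian hv).integrable_sq
  have := stein_identity hv (g := fun t => t - m) (g' := fun _ => (1:ℝ))
    (fun t => (hasDerivAt_id t).sub_const m) hint (integrable_const 1)
    (hsq.congr (Filter.Eventually.of_forall fun t => by ring))
  simp only [integral_const, measure_univ, ENNReal.toReal_one, probReal_univ, smul_eq_mul, one_mul,
    mul_one] at this
  rw [this]
  exact integral_congr_ae (Filter.Eventually.of_forall fun t => by ring)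
end Stein


end DGSMAux
end AuxHelpers

noncomputable section

/-- `u_i(x) = f(x) − ∫_ℝ f(x₁,…,x_{i−1},t,x_{i+1},…,x_d) dμ_i(t)`, the sum of all ANOVA
terms of `f` depending on `x_i`, for independent inputs with marginal laws `μs j`. -/
def uCompM {d : ℕ} (μs : Fin d → Measure ℝ) (f : (Fin d → ℝ) → ℝ) (i : Fin d)
    (x : Fin d → ℝ) : ℝ :=
  f x - ∫ t, f (Function.update x i t) ∂(μs i)

/-- The total variance `D = ∫ f² dμ − (∫ f dμ)²` with respect to the product measure. -/
def totVarM {d : ℕ} (μs : Fin d → Measure ℝ) (f : (Fin d → ℝ) → ℝ) : ℝ :=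
  (∫ x, (f x) ^ 2 ∂(Measure.pi μs)) - (∫ x, f x ∂(Measure.pi μs)) ^ 2

/-- The total partial variance `D_i^tot = ∫ u_i² dμ`. -/
def DTotM {d : ℕ} (μs : Fin d → Measure ℝ) (f : (Fin d → ℝ) → ℝ) (i : Fin d) : ℝ :=
  ∫ x, (uCompM μs f i x) ^ 2 ∂(Measure.pi μs)

/-- The total Sobol' sensitivity index `S_i^tot = D_i^tot / D`. -/
def STotM {d : ℕ} (μs : Fin d → Measure ℝ) (f : (Fin d → ℝ) → ℝ) (i : Fin d) : ℝ :=
  DTotM μs f i / totVarM μs f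

/-- The DGSM `ν_i = ∫ (∂f/∂x_i)² dμ`. -/
def nuM {d : ℕ} (μs : Fin d → Measure ℝ) (f : (Fin d → ℝ) → ℝ) (i : Fin d) : ℝ :=
  ∫ x, (pderivI f i x) ^ 2 ∂(Measure.pi μs)

/-- The DGSM `w_i = ∫ (∂f/∂x_i) dμ`. -/
def wM {d : ℕ} (μs : Fin d → Measure ℝ) (f : (Fin d → ℝ) → ℝ) (i : Fin d) : ℝ :=
  ∫ x, pderivI f i x ∂(Measure.pi μs)

open Filter in
private lemma dgsm_core (n : ℕ) (μs : Fin (n+1) → Measure ℝ)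
    (hprob : ∀ j, IsProbabilityMeasure (μs j)) (i : Fin (n+1))
    (mi : ℝ) (v : ℝ≥0) (hv : v ≠ 0) (hμi : μs i = gaussianReal mi v)
    (f : (Fin (n+1) → ℝ) → ℝ) (hf : ContDiff ℝ 1 f)
    (hfL2 : MemLp f 2 (Measure.pi μs))
    (hdL2 : MemLp (pderivI f i) 2 (Measure.pi μs))
    (hD : 0 < totVarM μs f) :
    (v : ℝ) * (wM μs f i) ^ 2 / totVarM μs f ≤ STotM μs f i := by
  haveI : ∀ j, IsProbabilityMeasure (μs j) := hprob
  have hvpos : (0:ℝ) < v := by positivity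
  set Pm := Measure.pi μs with hPm
  set Gm := μs i with hγdef
  set Rm := Measure.pi (fun j => μs (i.succAbove j)) with hρdef
  haveI : IsProbabilityMeasure Gm := hprob i
  haveI : IsProbabilityMeasure Rm := by
    rw [hρdef]; infer_instance
  haveI : IsProbabilityMeasure Pm := by
    rw [hPm]; infer_instance
  set e : (Fin (n+1) → ℝ) ≃ᵐ ℝ × (Fin n → ℝ) :=
    MeasurableEquiv.piFinSuccAbove (fun _ => ℝ) i with he
  have hMP : MeasurePreserving e Pm (Gm.prod Rm) := measurePreserving_piFinSuccAbove μs i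
  have hMPsymm : MeasurePreserving e.symm (Gm.prod Rm) Pm := hMP.symm e
  -- transfer of integrals
  have hTransInt : ∀ F : (Fin (n+1) → ℝ) → ℝ,
      ∫ x, F x ∂Pm = ∫ p, F (e.symm p) ∂(Gm.prod Rm) := by
    intro F
    rw [← hMPsymm.map_eq, integral_map_equiv]
  -- pointwise structure
  have hsymmp : ∀ (t : ℝ) (y : Fin n → ℝ), e.symm (t, y) = i.insertNth t y := fun t y => rfl
  set sec : (Fin n → ℝ) → ℝ → ℝ := fun y t => f (i.insertNth t y) with hsec
  set c : (Fin n → ℝ) → ℝ := fun y => ∫ t, sec y t ∂Gm with hcdef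
  have hx : ∀ x : Fin (n+1) → ℝ, i.insertNth (x i) (i.removeNth x) = x :=
    fun x => e.symm_apply_apply x
  have hupdate : ∀ (x : Fin (n+1) → ℝ) (t : ℝ),
      Function.update x i t = i.insertNth t (i.removeNth x) := by
    intro x t
    conv_lhs => rw [← hx x]
    rw [Fin.update_insertNth]
  have hucomp : ∀ x, uCompM μs f i x = f x - c (i.removeNth x) := by
    intro x
    simp only [uCompM, hcdef]
    congr 1
    refine integral_congr_ae (Eventually.of_forall fun t => ?_)
    show f (Function.update x i t) = sec (i.removeNth x) t
    rw [hupdate x t]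
  have hpd : ∀ (y : Fin n → ℝ) (t : ℝ), pderivI f i (i.insertNth t y) = deriv (sec y) t := by
    intro y t
    simp only [pderivI, Fin.insertNth_apply_same]
    congr 1
    funext s
    rw [Fin.update_insertNth]
  -- differentiability of sections
  have hinsdiff : ∀ y : Fin n → ℝ, Differentiable ℝ (fun t : ℝ => i.insertNth t y : ℝ → Fin (n+1) → ℝ) := by
    intro y
    rw [differentiable_pi]
    intro j
    refine Fin.succAboveCases i ?_ ?_ j
    · simp only [Fin.insertNth_apply_same]
      exact differentiable_id
    · intro k
      simp only [Fin.insertNth_apply_succAbove]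
      exact differentiable_const _
  have hsecdiff : ∀ y, Differentiable ℝ (sec y) :=
    fun y => (hf.differentiable one_ne_zero).comp (hinsdiff y)
  -- continuity facts
  have hinscont : Continuous (fun p : ℝ × (Fin n → ℝ) => i.insertNth p.1 p.2 : ℝ × (Fin n → ℝ) → Fin (n+1) → ℝ) := by
    apply continuous_pi
    intro j
    refine Fin.succAboveCases i ?_ ?_ j
    · simp only [Fin.insertNth_apply_same]
      exact continuous_fst
    · intro k
      simp only [Fin.insertNth_apply_succAbove]
      exact (continuous_apply k).comp continuous_snd
  have hcmeas : StronglyMeasurable c := by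
    have h1 : StronglyMeasurable (fun p : ℝ × (Fin n → ℝ) => f (i.insertNth p.1 p.2)) :=
      (hf.continuous.comp hinscont).stronglyMeasurable
    exact h1.integral_prod_left'
  -- L² transfers
  have hfL2' : MemLp (fun p : ℝ × (Fin n → ℝ) => f (e.symm p)) 2 (Gm.prod Rm) :=
    hfL2.comp_measurePreserving hMPsymm
  have hdL2' : MemLp (fun p : ℝ × (Fin n → ℝ) => pderivI f i (e.symm p)) 2 (Gm.prod Rm) :=
    hdL2.comp_measurePreserving hMPsymm
  have hsecL2 : ∀ᵐ y ∂(Rm), MemLp (sec y) 2 Gm := by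
    have h2 : Integrable (fun p : ℝ × (Fin n → ℝ) => (f (e.symm p))^2) (Gm.prod Rm) :=
      hfL2'.integrable_sq
    filter_upwards [h2.prod_left_ae] with y hy
    exact (memLp_two_iff_integrable_sq
      ((hsecdiff y).continuous.aestronglyMeasurable)).mpr hy
  have hderivL2 : ∀ᵐ y ∂(Rm), MemLp (deriv (sec y)) 2 Gm := by
    have h2 : Integrable (fun p : ℝ × (Fin n → ℝ) => (pderivI f i (e.symm p))^2) (Gm.prod Rm) :=
      hdL2'.integrable_sq
    filter_upwards [h2.prod_left_ae] with y hy
    refine (memLp_two_iff_integrable_sq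
      ((measurable_deriv (sec y)).aestronglyMeasurable)).mpr ?_
    have heq : (fun t => (pderivI f i (e.symm (t, y)))^2) = fun t => (deriv (sec y) t)^2 := by
      funext t; rw [hsymmp, hpd]
    rwa [heq] at hy
  -- MemLp of the conditional mean
  have hBint : Integrable (fun y => ∫ t, (f (e.symm (t, y)))^2 ∂Gm) Rm :=
    hfL2'.integrable_sq.integral_prod_right
  have hcL2 : MemLp c 2 Rm := by
    refine (memLp_two_iff_integrable_sq hcmeas.aestronglyMeasurable).mpr ?_
    refine hBint.mono' ((hcmeas.measurable.pow_const 2).aestronglyMeasurable) ?_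
    filter_upwards [hsecL2] with y hy
    have h1 : (c y)^2 ≤ ∫ t, (sec y t)^2 ∂Gm := by
      have h2 := DGSMAux.sq_integral_mul_le (μ := Gm) hy (memLp_const (1:ℝ))
      simpa [hcdef] using h2
    rw [Real.norm_eq_abs, abs_of_nonneg (sq_nonneg _)]
    exact h1
  -- removeNth is measure preserving
  have hremMeas : Measurable (fun x : Fin (n+1) → ℝ => i.removeNth x) :=
    measurable_pi_iff.mpr fun j => measurable_pi_apply _
  have hmapρ : Pm.map (fun x : Fin (n+1) → ℝ => i.removeNth x) = Rm := by
    have h1 : (fun x : Fin (n+1) → ℝ => i.removeNth x) = Prod.snd ∘ e := rfl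
    rw [h1, ← Measure.map_map measurable_snd e.measurable, hMP.map_eq]
    simp
  have hMPrem : MeasurePreserving (fun x : Fin (n+1) → ℝ => i.removeNth x) Pm Rm :=
    ⟨hremMeas, hmapρ⟩
  have hPfL2 : MemLp (fun x : Fin (n+1) → ℝ => c (i.removeNth x)) 2 Pm :=
    hcL2.comp_measurePreserving hMPrem
  have huL2 : MemLp (uCompM μs f i) 2 Pm := by
    have h1 : uCompM μs f i = fun x => f x - c (i.removeNth x) := funext hucomp
    rw [h1]
    exact hfL2.sub hPfL2
  -- eval i is measure preserving
  have hmapγ : Pm.map (fun x : Fin (n+1) → ℝ => x i) = Gm := by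
    have h1 : (fun x : Fin (n+1) → ℝ => x i) = Prod.fst ∘ e := rfl
    rw [h1, ← Measure.map_map measurable_fst e.measurable, hMP.map_eq]
    simp
  have hMPev : MeasurePreserving (fun x : Fin (n+1) → ℝ => x i) Pm Gm :=
    ⟨measurable_pi_apply i, hmapγ⟩
  have hg1 : MemLp (fun t : ℝ => t - mi) 2 Gm := by
    rw [hμi]; exact DGSMAux.memℒp_two_sub_const_gaussian hv
  have hxiL2 : MemLp (fun x : Fin (n+1) → ℝ => x i - mi) 2 Pm :=
    hg1.comp_measurePreserving hMPev
  -- second moment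
  have hsndmom : ∫ x, (x i - mi)^2 ∂Pm = (v:ℝ) := by
    have h1 : ∫ t, (t - mi)^2 ∂Gm = ∫ x, (x i - mi)^2 ∂Pm := by
      rw [← hmapγ, integral_map (measurable_pi_apply i).aemeasurable
        ((measurable_id.sub_const mi).pow_const 2).aestronglyMeasurable]
    rw [← h1, hμi, DGSMAux.integral_sq_sub_const_gaussian hv]
  -- Stein a.e.
  have hstein : ∀ᵐ y ∂(Rm), (v:ℝ) * ∫ t, deriv (sec y) t ∂Gm
      = ∫ t, (t - mi) * (sec y t - c y) ∂Gm := by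
    filter_upwards [hsecL2, hderivL2] with y hy hdy
    rw [hμi] at hy hdy ⊢
    have hyint : Integrable (sec y) (gaussianReal mi v) := hy.integrable one_le_two
    have hdint : Integrable (deriv (sec y)) (gaussianReal mi v) := hdy.integrable one_le_two
    have hmul : Integrable (fun t => (t - mi) * sec y t) (gaussianReal mi v) :=
      DGSMAux.L2.integrable_mul' (DGSMAux.memℒp_two_sub_const_gaussian hv) hy
    have hSt := DGSMAux.stein_identity hv (g := sec y) (g' := deriv (sec y))
      (fun t => ((hsecdiff y) t).hasDerivAt) hyint hdint hmul
    have hconst : Integrable (fun t : ℝ => (t - mi) * c y) (gaussianReal mi v) :=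
      ((DGSMAux.memℒp_two_sub_const_gaussian hv).integrable one_le_two).mul_const (c y)
    have hczero : ∫ t, (t - mi) * c y ∂(gaussianReal mi v) = 0 := by
      rw [integral_mul_const, DGSMAux.integral_sub_const_gaussian hv, zero_mul]
    have hsub : ∫ t, (t - mi) * (sec y t - c y) ∂(gaussianReal mi v)
        = (∫ t, (t - mi) * sec y t ∂(gaussianReal mi v))
          - ∫ t, (t - mi) * c y ∂(gaussianReal mi v) := by
      rw [← integral_sub hmul hconst]
      exact integral_congr_ae (Eventually.of_forall fun t => by ring)
    rw [hsub, hczero, sub_zero]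
    exact hSt
  -- Fubini, LHS
  have hw' : wM μs f i = ∫ y, ∫ t, deriv (sec y) t ∂Gm ∂(Rm) := by
    have h0 : wM μs f i = ∫ x, pderivI f i x ∂Pm := rfl
    have h2 : Integrable (fun p : ℝ × (Fin n → ℝ) => pderivI f i (e.symm p)) (Gm.prod Rm) :=
      hdL2'.integrable one_le_two
    rw [h0, hTransInt, integral_prod_symm _ h2]
    refine integral_congr_ae (Eventually.of_forall fun y => ?_)
    refine integral_congr_ae (Eventually.of_forall fun t => ?_)
    show pderivI f i (e.symm (t, y)) = deriv (sec y) t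
    rw [hsymmp, hpd]
  -- Fubini, RHS
  have hxiu_int : Integrable (fun x : Fin (n+1) → ℝ => (x i - mi) * uCompM μs f i x) Pm :=
    DGSMAux.L2.integrable_mul' hxiL2 huL2
  have hrhs : ∫ x, (x i - mi) * uCompM μs f i x ∂Pm
      = ∫ y, ∫ t, (t - mi) * (sec y t - c y) ∂Gm ∂(Rm) := by
    rw [hTransInt]
    have h2 : Integrable
        (fun p : ℝ × (Fin n → ℝ) => ((e.symm p) i - mi) * uCompM μs f i (e.symm p))
        (Gm.prod Rm) :=
      memLp_one_iff_integrable.mp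
        ((memLp_one_iff_integrable.mpr hxiu_int).comp_measurePreserving hMPsymm)
    rw [integral_prod_symm _ h2]
    refine integral_congr_ae (Eventually.of_forall fun y => ?_)
    refine integral_congr_ae (Eventually.of_forall fun t => ?_)
    show ((e.symm (t, y)) i - mi) * uCompM μs f i (e.symm (t, y)) = (t - mi) * (sec y t - c y)
    rw [hsymmp, hucomp, Fin.insertNth_apply_same, Fin.removeNth_insertNth]
  -- key identity
  have hkey : (v:ℝ) * wM μs f i = ∫ x, (x i - mi) * uCompM μs f i x ∂Pm := by
    rw [hw', hrhs, ← integral_const_mul]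
    exact integral_congr_ae hstein
  -- Cauchy–Schwarz and conclusion
  have hCS := DGSMAux.sq_integral_mul_le (μ := Pm) hxiL2 huL2
  rw [hsndmom, ← hkey] at hCS
  have hDTot : DTotM μs f i = ∫ x, (uCompM μs f i x)^2 ∂Pm := rfl
  have hmain : (v:ℝ) * (wM μs f i)^2 ≤ DTotM μs f i := by
    rw [hDTot]
    nlinarith [hCS, hvpos, sq_nonneg (wM μs f i)]
  have hST : STotM μs f i = DTotM μs f i / totVarM μs f := rfl
  rw [hST]
  exact (div_le_div_iff_of_pos_right hD).mpr hmain


/-- **Theorem 6 (lower bound for a normal input).** For independent inputs where the `i`-th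
input is Gaussian with variance `σ_i² > 0`, and `f, ∂f/∂x_i ∈ L²(μ)` with `D > 0`, one has
`σ_i² w_i² / D ≤ S_i^tot`. -/
theorem dgsm_lower_bound_normal (d : ℕ) (μs : Fin d → Measure ℝ)
    (hprob : ∀ j, IsProbabilityMeasure (μs j)) (i : Fin d)
    (mi : ℝ) (v : ℝ≥0) (hv : v ≠ 0) (hμi : μs i = gaussianReal mi v)
    (f : (Fin d → ℝ) → ℝ) (hf : ContDiff ℝ 1 f)
    (hfL2 : MemLp f 2 (Measure.pi μs))
    (hdL2 : MemLp (pderivI f i) 2 (Measure.pi μs))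
    (hD : 0 < totVarM μs f) :
    (v : ℝ) * (wM μs f i) ^ 2 / totVarM μs f ≤ STotM μs f i := by
  cases d with
  | zero => exact i.elim0
  | succ n => exact dgsm_core n μs hprob i mi v hv hμi f hf hfL2 hdL2 hD
end
end
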